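/- arXiv:1202.6146 — 8 statements merged into one kernel-verified Lean document; each statement's English description precedes it below -/
import Mathlib

section
/- Let (a,b) be positive integers and let S(a,b) = (r_1, ..., r_n) be the sequence obtained from the Euclidean algorithm of (a,b), namely: writing x_0 = b, x_1 = a and x_{i-1} = q_i x_i + x_{i+1} with x_1 > x_2 > ... > x_p ≥ 1 and x_{p+1} = 0, the sequence S(a,b) consists of x_1 repeated q_1 times, then x_2 repeated q_2 times, ..., then x_p repeated q_p times. Then the sum of the terms of S(a,b) equals a + b - gcd(a,b). -/
/-- The Euclidean-algorithm sequence `S(a,b)` of a pair of positive integers: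
with `x₀ = b`, `x₁ = a`, each remainder `xᵢ` is repeated `qᵢ` times, where the
`qᵢ` are the quotients of the Euclidean algorithm. -/
def euclidSeq : ℕ → ℕ → List ℕ
  | a, b =>
    if h : a = 0 then []
    else
      have : b % a < a := Nat.mod_lt _ (Nat.pos_of_ne_zero h)
      List.replicate (b / a) a ++ euclidSeq (b % a) a
  termination_by a _ => a

/-- The sum of the terms of the sequence `S(a,b)` obtained from the Euclidean
algorithm of positive integers `(a,b)` equals `a + b - gcd(a,b)`. -/
theorem euclidSeq_sum (a b : ℕ) (ha : 0 < a) (hb : 0 < b) :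
    (euclidSeq a b).sum = a + b - Nat.gcd a b := by
  induction a using Nat.strong_induction_on generalizing b with
  | _ a ih =>
    rw [euclidSeq, dif_neg ha.ne', List.sum_append, List.sum_replicate, smul_eq_mul, Nat.mul_comm]
    have hdm : a * (b / a) + b % a = b := Nat.div_add_mod b a
    have hgcd : Nat.gcd a b = Nat.gcd (b % a) a := Nat.gcd_rec a b
    rcases Nat.eq_zero_or_pos (b % a) with h0 | h0
    · rw [h0] at hdm hgcd
      rw [h0, euclidSeq, dif_pos rfl]
      simp only [List.sum_nil, add_zero, Nat.gcd_zero_left] at *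
      omega
    · rw [ih (b % a) (Nat.mod_lt _ ha) a h0 ha]
      have : Nat.gcd (b % a) a ≤ a := Nat.le_of_dvd ha (Nat.gcd_dvd_right _ _)
      omega
end

section
/- Let (a,b) be positive integers and let S(a,b) = (r_1, ..., r_n) be the sequence obtained from the Euclidean algorithm of (a,b) (each remainder x_i repeated q_i times, where q_i are the quotients). Then the sum of the squares of the terms of S(a,b) equals a·b. -/
theorem euclidSeq_sum_sq_aux (a : ℕ) : ∀ b, ((euclidSeq a b).map (fun r => r ^ 2)).sum = a * b := by
  induction a using Nat.strong_induction_on with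
  | _ a ih =>
    intro b
    rw [euclidSeq]
    by_cases h : a = 0
    · simp [h]
    · simp only [h, dif_neg, not_false_iff, List.map_append, List.sum_append,
        List.map_replicate, List.sum_replicate, smul_eq_mul]
      rw [ih (b % a) (Nat.mod_lt _ (Nat.pos_of_ne_zero h)) a]
      have := Nat.div_add_mod b a
      nlinarith [Nat.div_add_mod b a]

/-- The sum of the squares of the terms of the sequence `S(a,b)` obtained from
the Euclidean algorithm of positive integers `(a,b)` equals `a * b`. -/
theorem euclidSeq_sum_sq (a b : ℕ) (ha : 0 < a) (hb : 0 < b) :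
    ((euclidSeq a b).map (fun r => r ^ 2)).sum = a * b := euclidSeq_sum_sq_aux a b
end

section
/- There are no positive integers d, m, a with a > 1 satisfying simultaneously d² = m·a² and 3d - 2 = m·a. -/
/-- There are no positive integers `d`, `m`, `a` with `a > 1` satisfying
simultaneously `d² = m·a²` and `3d - 2 = m·a`. -/
theorem no_constant_multiplicity_solution :
    ¬ ∃ d m a : ℤ, 0 < d ∧ 0 < m ∧ 1 < a ∧ d ^ 2 = m * a ^ 2 ∧ 3 * d - 2 = m * a := by
  rintro ⟨d, m, a, hd, hm, ha, h1, h2⟩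
  have e : d ^ 2 = (3 * d - 2) * a := by linear_combination h1 - a * h2
  have h4 : (3 * d - 2) * (9 * a - 3 * d - 2) = 4 := by linear_combination (-9 : ℤ) * e
  have hpos : 0 < 3 * d - 2 := by nlinarith
  have h5 : 0 < 9 * a - 3 * d - 2 := by nlinarith
  have hd2 : d ≤ 2 := by nlinarith
  interval_cases d <;> omega
end

section
/- Suppose d and r_1, ..., r_m are positive integers satisfying d² = r_1² + ... + r_m² and 3d - 2 = r_1 + ... + r_m. Then the sequence (r_1, ..., r_m) is not constant with common value greater than 1; that is, it is impossible that r_1 = r_2 = ... = r_m = a for some integer a > 1. -/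
/-- If `d` and `r₁, …, r_m` are positive integers with `d² = Σ rᵢ²` and
`3d - 2 = Σ rᵢ`, then the sequence `(r₁, …, r_m)` cannot be constant with
common value greater than `1`. -/
theorem multiplicity_sequence_not_constant
    (d : ℤ) (hd : 0 < d) (m : ℕ) (hm : 1 ≤ m) (r : Fin m → ℤ)
    (hr : ∀ i, 0 < r i)
    (h1 : d ^ 2 = ∑ i, r i ^ 2)
    (h2 : 3 * d - 2 = ∑ i, r i) :
    ¬ ∃ a : ℤ, 1 < a ∧ ∀ i, r i = a := by
  rintro ⟨a, ha, hconst⟩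
  simp only [hconst, Finset.sum_const, Finset.card_univ, Fintype.card_fin,
    nsmul_eq_mul] at h1 h2
  have hkey : d ^ 2 = (3 * d - 2) * a := by
    rw [h2, h1]; ring
  have hdvd : (3 * d - 2 : ℤ) ∣ 4 := ⟨9 * a - (3 * d + 2), by linear_combination 9 * hkey⟩
  have hle : 3 * d - 2 ≤ 4 := Int.le_of_dvd (by norm_num) hdvd
  have hd2 : d ≤ 2 := by omega
  interval_cases d <;> omega
end

section
/- Let d be a positive integer, m ≥ 1, and r_1, ..., r_m positive integers with d² = Σ r_i² and 3d - 2 = Σ r_i. Suppose d' and r_1', ..., r_m' are positive integers with r_i = 2 r_i' for all i, and suppose (d'-1)(d'-2) = Σ r_i'(r_i' - 1) and (d')² = Σ (r_i')² - 1. Then a contradiction follows; i.e., no such data exist. -/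
/-- Arithmetic contradiction: there exist no positive integers `d`, `m ≥ 1`,
`r₁, …, r_m` with `d² = Σ rᵢ²` and `3d - 2 = Σ rᵢ`, together with positive
integers `d'`, `r₁', …, r_m'` satisfying `rᵢ = 2rᵢ'`,
`(d'-1)(d'-2) = Σ rᵢ'(rᵢ'-1)` and `d'² = Σ rᵢ'² - 1`. -/
theorem no_half_multiplicity_curve
    (d : ℤ) (hd : 0 < d) (m : ℕ) (hm : 1 ≤ m)
    (r : Fin m → ℤ) (hr : ∀ i, 0 < r i)
    (h1 : d ^ 2 = ∑ i, r i ^ 2)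
    (h2 : 3 * d - 2 = ∑ i, r i)
    (d' : ℤ) (hd' : 0 < d')
    (r' : Fin m → ℤ) (hr' : ∀ i, 0 < r' i)
    (hhalf : ∀ i, r i = 2 * r' i)
    (h3 : (d' - 1) * (d' - 2) = ∑ i, r' i * (r' i - 1))
    (h4 : d' ^ 2 = (∑ i, r' i ^ 2) - 1) :
    False := by
  have e1 : ∑ i, r i = 2 * ∑ i, r' i := by
    rw [Finset.mul_sum]; exact Finset.sum_congr rfl fun i _ => hhalf i
  have e2 : ∑ i, r i ^ 2 = 4 * ∑ i, r' i ^ 2 := by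
    rw [Finset.mul_sum]
    exact Finset.sum_congr rfl fun i _ => by rw [hhalf i]; ring
  have e3 : ∑ i, r' i * (r' i - 1) = (∑ i, r' i ^ 2) - ∑ i, r' i := by
    rw [← Finset.sum_sub_distrib]
    exact Finset.sum_congr rfl fun i _ => by ring
  have hd2 : d = 2 * d' := by
    have : 3 * d - 2 = 2 * (3 * d' - 1) := by linarith [h2, e1, h3, e3, h4]
    linarith
  have : d ^ 2 = 4 * d' ^ 2 := by rw [hd2]; ring
  linarith [h1, e2, h4]
end

section
/- Define a weighted graph to be a finite simple graph with an integer weight attached to each vertex, and define blow-up/blow-down of weighted graphs in the classical way (blowing up at a vertex, at an edge, or freely, creating a new vertex of weight -1; equivalence ~ is generated by these moves). A weighted pair is (G, v) with v a vertex of G; a blowing-up of (G,v) is a pair (G', v') where G' blows up G at v or at an edge incident to v, and v' is the new vertex. (G,v) is erasable if some finite sequence of such blowings-up (G,v) = (G_0,e_0) ← ... ← (G_n,e_n) has G_n minus e_n equivalent to the empty weighted graph. Theorem: if (G,v) is a weighted pair in which G has a vertex w of nonnegative weight with w ≠ v and w not adjacent to v, then (G,v) is not erasable. -/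
/-- A weighted graph: a finite simple graph (on a subset of `ℕ`) with an
integer weight attached to each vertex. -/
structure WGraph where
  verts : Finset ℕ
  Adj : ℕ → ℕ → Prop
  symm : ∀ a b, Adj a b → Adj b a
  loopless : ∀ a, ¬ Adj a a
  support : ∀ a b, Adj a b → a ∈ verts ∧ b ∈ verts
  weight : ℕ → ℤ

/-- `G'` is the free blowing-up of `G`, with created vertex `e` (a new
isolated vertex of weight `-1`). -/
def IsFreeBlowup (G G' : WGraph) (e : ℕ) : Prop :=
  e ∉ G.verts ∧ G'.verts = insert e G.verts ∧
  (∀ a b, G'.Adj a b ↔ G.Adj a b) ∧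
  (∀ x, G'.weight x = if x = e then -1 else G.weight x)

/-- `G'` is the blowing-up of `G` at the vertex `u`, with created vertex `e`:
a new vertex `e` of weight `-1` is joined to `u`, and the weight of `u` drops
by `1`. -/
def IsVertexBlowup (G G' : WGraph) (u e : ℕ) : Prop :=
  u ∈ G.verts ∧ e ∉ G.verts ∧ G'.verts = insert e G.verts ∧
  (∀ a b, G'.Adj a b ↔ (G.Adj a b ∨ (a = u ∧ b = e) ∨ (a = e ∧ b = u))) ∧
  (∀ x, G'.weight x = if x = e then -1 else if x = u then G.weight u - 1 else G.weight x)

/-- `G'` is the blowing-up of `G` at the edge `{u₁, u₂}`, with created vertex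
`e`: the edge is removed, a new vertex `e` of weight `-1` is joined to `u₁`
and `u₂`, and the weights of `u₁`, `u₂` each drop by `1`. -/
def IsEdgeBlowup (G G' : WGraph) (u₁ u₂ e : ℕ) : Prop :=
  G.Adj u₁ u₂ ∧ e ∉ G.verts ∧ G'.verts = insert e G.verts ∧
  (∀ a b, G'.Adj a b ↔
    ((G.Adj a b ∧ ¬(a = u₁ ∧ b = u₂) ∧ ¬(a = u₂ ∧ b = u₁)) ∨
      (a = e ∧ (b = u₁ ∨ b = u₂)) ∨ (b = e ∧ (a = u₁ ∨ a = u₂)))) ∧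
  (∀ x, G'.weight x = if x = e then -1 else if x = u₁ then G.weight u₁ - 1
    else if x = u₂ then G.weight u₂ - 1 else G.weight x)

/-- `G'` is a blowing-up of the weighted graph `G` (at a vertex, at an edge,
or a free blowing-up). -/
def IsBlowup (G G' : WGraph) : Prop :=
  (∃ e, IsFreeBlowup G G' e) ∨ (∃ u e, IsVertexBlowup G G' u e) ∨
    (∃ u₁ u₂ e, IsEdgeBlowup G G' u₁ u₂ e)

/-- Equivalence of weighted graphs: generated by blowings-up and
blowings-down. -/
def WEquiv : WGraph → WGraph → Prop :=
  Relation.EqvGen IsBlowup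

/-- A weighted graph is equivalent to the empty weighted graph. -/
def EquivEmpty (G : WGraph) : Prop :=
  ∃ H : WGraph, WEquiv G H ∧ H.verts = ∅

/-- `H` is the weighted graph obtained from `G` by deleting the vertex `v`
(and all edges at `v`). -/
def IsDeleteVert (G : WGraph) (v : ℕ) (H : WGraph) : Prop :=
  H.verts = G.verts.erase v ∧
  (∀ a b, H.Adj a b ↔ (G.Adj a b ∧ a ≠ v ∧ b ≠ v)) ∧
  (∀ x, H.weight x = G.weight x)

/-- `(G', v')` is a blowing-up of the weighted pair `(G, v)`: `G'` blows up
`G` at the distinguished vertex `v` or at an edge incident to `v`, and the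
created vertex `v'` becomes the distinguished vertex. -/
def PairBlowup (G : WGraph) (v : ℕ) (G' : WGraph) (v' : ℕ) : Prop :=
  IsVertexBlowup G G' v v' ∨ ∃ u, G.Adj v u ∧ IsEdgeBlowup G G' v u v'

/-- There is a sequence of `n` blowings-up of weighted pairs starting at
`(G, v)` and ending at `(Gₙ, eₙ)` with `Gₙ \ {eₙ}` equivalent to the empty
weighted graph. -/
def EraseSeq (G : WGraph) (v : ℕ) (n : ℕ) : Prop :=
  ∃ (Gs : ℕ → WGraph) (es : ℕ → ℕ),
    Gs 0 = G ∧ es 0 = v ∧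
    (∀ i, i < n → PairBlowup (Gs i) (es i) (Gs (i + 1)) (es (i + 1))) ∧
    ∃ H : WGraph, IsDeleteVert (Gs n) (es n) H ∧ EquivEmpty H

/-- The weighted pair `(G, v)` is erasable. -/
def Erasable (G : WGraph) (v : ℕ) : Prop :=
  ∃ n : ℕ, EraseSeq G v n

/-- `ℓ(G, v) ∈ ℕ ∪ {∞}`: the minimal length of an erasing sequence of the
weighted pair `(G, v)`, or `∞` if `(G, v)` is not erasable. -/
noncomputable def ell (G : WGraph) (v : ℕ) : ℕ∞ :=
  sInf {n : ℕ∞ | ∃ m : ℕ, n = (m : ℕ∞) ∧ EraseSeq G v m}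

/-! ### Auxiliary development: the intersection form and negative definiteness -/

open Finset in
open Classical in
/-- The intersection form of a weighted graph, evaluated at `f`. -/
noncomputable def QF (G : WGraph) (f : ℕ → ℤ) : ℤ :=
  (∑ a ∈ G.verts, (f a) ^ 2 * G.weight a) +
  ∑ a ∈ G.verts, ∑ b ∈ G.verts, (if G.Adj a b then f a * f b else 0)

/-- Negative definiteness of the intersection form. -/
def NegDef (G : WGraph) : Prop :=
  ∀ f : ℕ → ℤ, (∀ x, x ∉ G.verts → f x = 0) → (∃ x, f x ≠ 0) → QF G f < 0

lemma sum_pull {V : Finset ℕ} (p : Prop) [Decidable p] (F : ℕ → ℤ) :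
    (∑ b ∈ V, (if p then F b else 0)) = if p then ∑ b ∈ V, F b else 0 := by
  split_ifs <;> simp

open Finset in
lemma QF_free {G G' : WGraph} {e : ℕ} (h : IsFreeBlowup G G' e)
    (f g : ℕ → ℤ) (hg : ∀ a ∈ G.verts, g a = f a) :
    QF G' f = QF G g - (0 - f e) ^ 2 := by
  classical
  obtain ⟨he, hV, hAdj, hw⟩ := h
  have hne : ∀ a ∈ G.verts, a ≠ e := fun a ha hae => he (hae ▸ ha)
  have hAe : ∀ b, ¬ G'.Adj e b := by
    intro b hb
    exact he (G.support e b ((hAdj e b).mp hb)).1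
  have hAe' : ∀ a, ¬ G'.Adj a e := fun a ha => hAe a (G'.symm _ _ ha)
  unfold QF
  rw [hV, Finset.sum_insert he, Finset.sum_insert he]
  have hdiag : ∑ a ∈ G.verts, f a ^ 2 * G'.weight a
      = ∑ a ∈ G.verts, g a ^ 2 * G.weight a := by
    refine Finset.sum_congr rfl fun a ha => ?_
    rw [hw, if_neg (hne a ha), hg a ha]
  have hrow : (∑ b ∈ insert e G.verts, if G'.Adj e b then f e * f b else 0) = 0 := by
    refine Finset.sum_eq_zero fun b _ => if_neg (hAe b)
  have hrows : (∑ a ∈ G.verts, ∑ b ∈ insert e G.verts, if G'.Adj a b then f a * f b else 0)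
      = ∑ a ∈ G.verts, ∑ b ∈ G.verts, (if G.Adj a b then g a * g b else 0) := by
    refine Finset.sum_congr rfl fun a ha => ?_
    rw [Finset.sum_insert he, if_neg (hAe' a), zero_add]
    refine Finset.sum_congr rfl fun b hb => ?_
    by_cases hab : G.Adj a b
    · rw [if_pos ((hAdj a b).mpr hab), if_pos hab, hg a ha, hg b hb]
    · rw [if_neg (fun hA => hab ((hAdj a b).mp hA)), if_neg hab]
  rw [hdiag, hrow, hrows, hw e, if_pos rfl]
  ring

open Finset in
lemma QF_vertex {G G' : WGraph} {u e : ℕ} (h : IsVertexBlowup G G' u e)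
    (f g : ℕ → ℤ) (hg : ∀ a ∈ G.verts, g a = f a) :
    QF G' f = QF G g - (f u - f e) ^ 2 := by
  classical
  obtain ⟨hu, he, hV, hAdj, hw⟩ := h
  have hne : ∀ a ∈ G.verts, a ≠ e := fun a ha hae => he (hae ▸ ha)
  have hAe : ∀ b ∈ G.verts, (G'.Adj e b ↔ b = u) := by
    intro b hb
    rw [hAdj]
    constructor
    · rintro (hab | ⟨heu, -⟩ | ⟨-, hbu⟩)
      · exact absurd (G.support e b hab).1 he
      · exact absurd (heu ▸ hu) he
      · exact hbu
    · rintro rfl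
      exact Or.inr (Or.inr ⟨rfl, rfl⟩)
  have hAe' : ∀ a ∈ G.verts, (G'.Adj a e ↔ a = u) := by
    intro a ha
    constructor
    · intro hae
      exact (hAe a ha).mp (G'.symm _ _ hae)
    · rintro rfl
      rw [hAdj]
      exact Or.inr (Or.inl ⟨rfl, rfl⟩)
  have hAVV : ∀ a ∈ G.verts, ∀ b ∈ G.verts, (G'.Adj a b ↔ G.Adj a b) := by
    intro a ha b hb
    rw [hAdj]
    constructor
    · rintro (hab | ⟨-, hbe⟩ | ⟨hae, -⟩)
      · exact hab
      · exact absurd hbe (hne b hb)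
      · exact absurd hae (hne a ha)
    · exact Or.inl
  unfold QF
  rw [hV, Finset.sum_insert he, Finset.sum_insert he]
  have hdiag : ∑ a ∈ G.verts, f a ^ 2 * G'.weight a
      = (∑ a ∈ G.verts, g a ^ 2 * G.weight a) - f u ^ 2 := by
    have h1 : ∑ a ∈ G.verts, f a ^ 2 * G'.weight a
        = ∑ a ∈ G.verts, (g a ^ 2 * G.weight a - (if a = u then f u ^ 2 else 0)) := by
      refine Finset.sum_congr rfl fun a ha => ?_
      rw [hw, if_neg (hne a ha), hg a ha]
      by_cases hau : a = u
      · subst hau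
        rw [if_pos rfl, if_pos rfl]
        ring
      · rw [if_neg hau, if_neg hau]
        ring
    rw [h1, Finset.sum_sub_distrib, Finset.sum_ite_eq' G.verts u (fun _ => f u ^ 2),
      if_pos hu]
  have hrow : (∑ b ∈ insert e G.verts, if G'.Adj e b then f e * f b else 0)
      = f e * f u := by
    rw [Finset.sum_insert he, if_neg (G'.loopless e), zero_add]
    have h2 : ∀ b ∈ G.verts, (if G'.Adj e b then f e * f b else 0)
        = (if b = u then f e * f b else 0) := by
      intro b hb
      by_cases hbu : b = u
      · rw [if_pos ((hAe b hb).mpr hbu), if_pos hbu]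
      · rw [if_neg (fun hA => hbu ((hAe b hb).mp hA)), if_neg hbu]
    rw [Finset.sum_congr rfl h2, Finset.sum_ite_eq' G.verts u (fun b => f e * f b),
      if_pos hu]
  have hrows : (∑ a ∈ G.verts, ∑ b ∈ insert e G.verts, if G'.Adj a b then f a * f b else 0)
      = f u * f e + ∑ a ∈ G.verts, ∑ b ∈ G.verts, (if G.Adj a b then g a * g b else 0) := by
    have h3 : ∀ a ∈ G.verts,
        (∑ b ∈ insert e G.verts, if G'.Adj a b then f a * f b else 0)
        = (if a = u then f a * f e else 0)
          + ∑ b ∈ G.verts, (if G.Adj a b then g a * g b else 0) := by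
      intro a ha
      rw [Finset.sum_insert he]
      congr 1
      · by_cases hau : a = u
        · rw [if_pos ((hAe' a ha).mpr hau), if_pos hau]
        · rw [if_neg (fun hA => hau ((hAe' a ha).mp hA)), if_neg hau]
      · refine Finset.sum_congr rfl fun b hb => ?_
        by_cases hab : G.Adj a b
        · rw [if_pos ((hAVV a ha b hb).mpr hab), if_pos hab, hg a ha, hg b hb]
        · rw [if_neg (fun hA => hab ((hAVV a ha b hb).mp hA)), if_neg hab]
    rw [Finset.sum_congr rfl h3, Finset.sum_add_distrib,
      Finset.sum_ite_eq' G.verts u (fun a => f a * f e), if_pos hu]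
  rw [hdiag, hrow, hrows, hw e, if_pos rfl]
  ring

open Finset in
lemma QF_edge {G G' : WGraph} {u₁ u₂ e : ℕ} (h : IsEdgeBlowup G G' u₁ u₂ e)
    (f g : ℕ → ℤ) (hg : ∀ a ∈ G.verts, g a = f a) :
    QF G' f = QF G g - (f u₁ + f u₂ - f e) ^ 2 := by
  classical
  obtain ⟨hadj, he, hV, hAdj, hw⟩ := h
  have hadj' : G.Adj u₂ u₁ := G.symm _ _ hadj
  have hu1 : u₁ ∈ G.verts := (G.support _ _ hadj).1
  have hu2 : u₂ ∈ G.verts := (G.support _ _ hadj).2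
  have h12 : u₁ ≠ u₂ := fun h' => G.loopless u₁ (h' ▸ hadj)
  have hne : ∀ a ∈ G.verts, a ≠ e := fun a ha hae => he (hae ▸ ha)
  have hAe : ∀ b ∈ G.verts, (G'.Adj e b ↔ (b = u₁ ∨ b = u₂)) := by
    intro b hb
    rw [hAdj]
    constructor
    · rintro (⟨hab, -⟩ | ⟨-, hb'⟩ | ⟨hbe, -⟩)
      · exact absurd (G.support e b hab).1 he
      · exact hb'
      · exact absurd hbe (hne b hb)
    · intro hb'
      exact Or.inr (Or.inl ⟨rfl, hb'⟩)
  have hAe' : ∀ a ∈ G.verts, (G'.Adj a e ↔ (a = u₁ ∨ a = u₂)) := by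
    intro a ha
    constructor
    · intro hae
      exact (hAe a ha).mp (G'.symm _ _ hae)
    · intro ha'
      rw [hAdj]
      exact Or.inr (Or.inr ⟨rfl, ha'⟩)
  have hAVV : ∀ a ∈ G.verts, ∀ b ∈ G.verts,
      (G'.Adj a b ↔ (G.Adj a b ∧ ¬(a = u₁ ∧ b = u₂) ∧ ¬(a = u₂ ∧ b = u₁))) := by
    intro a ha b hb
    rw [hAdj]
    constructor
    · rintro (hh | ⟨hae, -⟩ | ⟨hbe, -⟩)
      · exact hh
      · exact absurd hae (hne a ha)
      · exact absurd hbe (hne b hb)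
    · exact Or.inl
  unfold QF
  rw [hV, Finset.sum_insert he, Finset.sum_insert he]
  have hdiag : ∑ a ∈ G.verts, f a ^ 2 * G'.weight a
      = (∑ a ∈ G.verts, g a ^ 2 * G.weight a) - f u₁ ^ 2 - f u₂ ^ 2 := by
    have h1 : ∑ a ∈ G.verts, f a ^ 2 * G'.weight a
        = ∑ a ∈ G.verts,
            (g a ^ 2 * G.weight a - (if a = u₁ then f u₁ ^ 2 else 0)
              - (if a = u₂ then f u₂ ^ 2 else 0)) := by
      refine Finset.sum_congr rfl fun a ha => ?_
      rw [hw, if_neg (hne a ha), hg a ha]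
      by_cases h1 : a = u₁
      · subst h1
        rw [if_pos rfl, if_pos rfl, if_neg h12]
        ring
      · rw [if_neg h1, if_neg h1]
        by_cases h2 : a = u₂
        · subst h2
          rw [if_pos rfl, if_pos rfl]
          ring
        · rw [if_neg h2, if_neg h2]
          ring
    rw [h1, Finset.sum_sub_distrib, Finset.sum_sub_distrib,
      Finset.sum_ite_eq' G.verts u₁ (fun _ => f u₁ ^ 2), if_pos hu1,
      Finset.sum_ite_eq' G.verts u₂ (fun _ => f u₂ ^ 2), if_pos hu2]
  have hrow : (∑ b ∈ insert e G.verts, if G'.Adj e b then f e * f b else 0)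
      = f e * f u₁ + f e * f u₂ := by
    rw [Finset.sum_insert he, if_neg (G'.loopless e), zero_add]
    have h2 : ∀ b ∈ G.verts, (if G'.Adj e b then f e * f b else 0)
        = (if b = u₁ then f e * f b else 0) + (if b = u₂ then f e * f b else 0) := by
      intro b hb
      by_cases hb1 : b = u₁
      · subst hb1
        rw [if_pos ((hAe _ hb).mpr (Or.inl rfl)), if_pos rfl, if_neg h12]
        ring
      · rw [if_neg hb1]
        by_cases hb2 : b = u₂
        · subst hb2
          rw [if_pos ((hAe _ hb).mpr (Or.inr rfl)), if_pos rfl]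
          ring
        · rw [if_neg (fun hA => by rcases (hAe b hb).mp hA with h|h <;> tauto),
            if_neg hb2]
          ring
    rw [Finset.sum_congr rfl h2, Finset.sum_add_distrib,
      Finset.sum_ite_eq' G.verts u₁ (fun b => f e * f b), if_pos hu1,
      Finset.sum_ite_eq' G.verts u₂ (fun b => f e * f b), if_pos hu2]
  have h4 : ∀ a ∈ G.verts, (if G'.Adj a e then f a * f e else 0)
      = (if a = u₁ then f a * f e else 0) + (if a = u₂ then f a * f e else 0) := by
    intro a ha
    by_cases ha1 : a = u₁
    · subst ha1
      rw [if_pos ((hAe' _ ha).mpr (Or.inl rfl)), if_pos rfl, if_neg h12]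
      ring
    · rw [if_neg ha1]
      by_cases ha2 : a = u₂
      · subst ha2
        rw [if_pos ((hAe' _ ha).mpr (Or.inr rfl)), if_pos rfl]
        ring
      · rw [if_neg (fun hA => by rcases (hAe' a ha).mp hA with h|h <;> tauto),
          if_neg ha2]
        ring
  have h5 : ∀ a ∈ G.verts, (∑ b ∈ G.verts, if G'.Adj a b then f a * f b else 0)
      = (∑ b ∈ G.verts, (if G.Adj a b then g a * g b else 0))
        - ((if a = u₁ then f u₁ * f u₂ else 0) + (if a = u₂ then f u₂ * f u₁ else 0)) := by
    intro a ha
    by_cases ha1 : a = u₁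
    · rw [if_pos ha1, if_neg (fun h => h12 (ha1.symm.trans h)), add_zero, ha1]
      have hterm : ∀ b ∈ G.verts, (if G'.Adj u₁ b then f u₁ * f b else 0)
          = (if G.Adj u₁ b then g u₁ * g b else 0) - (if b = u₂ then f u₁ * f b else 0) := by
        intro b hb
        by_cases hb2 : b = u₂
        · rw [if_neg (fun hA => ((hAVV u₁ hu1 b hb).mp hA).2.1 ⟨rfl, hb2⟩),
            if_pos (show G.Adj u₁ b by rw [hb2]; exact hadj), if_pos hb2,
            hg u₁ hu1, hg b hb]
          ring
        · rw [if_neg hb2, sub_zero]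
          by_cases hab : G.Adj u₁ b
          · rw [if_pos ((hAVV u₁ hu1 b hb).mpr
              ⟨hab, fun h => hb2 h.2, fun h => h12 h.1⟩), if_pos hab,
              hg u₁ hu1, hg b hb]
          · rw [if_neg (fun hA => hab ((hAVV u₁ hu1 b hb).mp hA).1), if_neg hab]
      rw [Finset.sum_congr rfl hterm, Finset.sum_sub_distrib,
        Finset.sum_ite_eq' G.verts u₂ (fun b => f u₁ * f b), if_pos hu2]
    · rw [if_neg ha1]
      by_cases ha2 : a = u₂
      · rw [if_pos ha2, zero_add, ha2]
        have hterm : ∀ b ∈ G.verts, (if G'.Adj u₂ b then f u₂ * f b else 0)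
            = (if G.Adj u₂ b then g u₂ * g b else 0) - (if b = u₁ then f u₂ * f b else 0) := by
          intro b hb
          by_cases hb1 : b = u₁
          · rw [if_neg (fun hA => ((hAVV u₂ hu2 b hb).mp hA).2.2 ⟨rfl, hb1⟩),
              if_pos (show G.Adj u₂ b by rw [hb1]; exact hadj'), if_pos hb1,
              hg u₂ hu2, hg b hb]
            ring
          · rw [if_neg hb1, sub_zero]
            by_cases hab : G.Adj u₂ b
            · rw [if_pos ((hAVV u₂ hu2 b hb).mpr
                ⟨hab, fun h => h12 h.1.symm, fun h => hb1 h.2⟩), if_pos hab,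
                hg u₂ hu2, hg b hb]
            · rw [if_neg (fun hA => hab ((hAVV u₂ hu2 b hb).mp hA).1), if_neg hab]
        rw [Finset.sum_congr rfl hterm, Finset.sum_sub_distrib,
          Finset.sum_ite_eq' G.verts u₁ (fun b => f u₂ * f b), if_pos hu1]
      · rw [if_neg ha2, add_zero, sub_zero]
        refine Finset.sum_congr rfl fun b hb => ?_
        by_cases hab : G.Adj a b
        · rw [if_pos ((hAVV a ha b hb).mpr
            ⟨hab, fun h => ha1 h.1, fun h => ha2 h.1⟩), if_pos hab, hg a ha, hg b hb]
        · rw [if_neg (fun hA => hab ((hAVV a ha b hb).mp hA).1), if_neg hab]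
  have hrows : (∑ a ∈ G.verts, ∑ b ∈ insert e G.verts, if G'.Adj a b then f a * f b else 0)
      = (f u₁ * f e + f u₂ * f e) - (f u₁ * f u₂ + f u₂ * f u₁)
        + ∑ a ∈ G.verts, ∑ b ∈ G.verts, (if G.Adj a b then g a * g b else 0) := by
    have h3 : ∀ a ∈ G.verts,
        (∑ b ∈ insert e G.verts, if G'.Adj a b then f a * f b else 0)
        = (((if a = u₁ then f a * f e else 0) + (if a = u₂ then f a * f e else 0))
          - ((if a = u₁ then f u₁ * f u₂ else 0) + (if a = u₂ then f u₂ * f u₁ else 0)))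
          + ∑ b ∈ G.verts, (if G.Adj a b then g a * g b else 0) := by
      intro a ha
      rw [Finset.sum_insert he, h4 a ha, h5 a ha]
      ring
    rw [Finset.sum_congr rfl h3, Finset.sum_add_distrib, Finset.sum_sub_distrib,
      Finset.sum_add_distrib, Finset.sum_add_distrib,
      Finset.sum_ite_eq' G.verts u₁ (fun a => f a * f e), if_pos hu1,
      Finset.sum_ite_eq' G.verts u₂ (fun a => f a * f e), if_pos hu2,
      Finset.sum_ite_eq' G.verts u₁ (fun _ => f u₁ * f u₂), if_pos hu1,
      Finset.sum_ite_eq' G.verts u₂ (fun _ => f u₂ * f u₁), if_pos hu2]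
  rw [hdiag, hrow, hrows, hw e, if_pos rfl]
  ring

lemma QF_zero {G : WGraph} {g : ℕ → ℤ} (hg : ∀ a ∈ G.verts, g a = 0) :
    QF G g = 0 := by
  classical
  unfold QF
  rw [Finset.sum_eq_zero (fun a ha => by rw [hg a ha]; ring),
    Finset.sum_eq_zero (fun a ha => Finset.sum_eq_zero fun b hb => ?_), add_zero]
  rw [hg a ha]
  simp

/-- Negative definiteness transfers along a blowup with formula
`QF G' f = QF G g - (c f - f e)^2`. -/
lemma negDef_iff_of_formula {G G' : WGraph} {e : ℕ} (he : e ∉ G.verts)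
    (hV : G'.verts = insert e G.verts)
    (c : (ℕ → ℤ) → ℤ)
    (hc : ∀ f g : ℕ → ℤ, (∀ a ∈ G.verts, g a = f a) → c f = c g)
    (hc0 : ∀ g : ℕ → ℤ, (∀ a ∈ G.verts, g a = 0) → c g = 0)
    (hQ : ∀ f g : ℕ → ℤ, (∀ a ∈ G.verts, g a = f a) → QF G' f = QF G g - (c f - f e) ^ 2) :
    (NegDef G ↔ NegDef G') := by
  classical
  constructor
  · intro hG f hsupp hne0
    set g : ℕ → ℤ := fun x => if x = e then 0 else f x with hgdef
    have hg : ∀ a ∈ G.verts, g a = f a := by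
      intro a ha
      simp only [hgdef]
      rw [if_neg (fun hae : a = e => he (hae ▸ ha))]
    have hQ' := hQ f g hg
    by_cases hg0 : ∀ a ∈ G.verts, g a = 0
    · have hfe : f e ≠ 0 := by
        obtain ⟨x, hx⟩ := hne0
        by_cases hxe : x = e
        · exact hxe ▸ hx
        · exfalso
          by_cases hxv : x ∈ G.verts
          · exact hx ((hg x hxv).symm.trans (hg0 x hxv))
          · exact hx (hsupp x (by rw [hV]; simp [hxe, hxv]))
      have hcf : c f = 0 := (hc f g hg).trans (hc0 g hg0)
      rw [hQ', QF_zero hg0, hcf]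
      have : 0 < f e ^ 2 := (sq_nonneg _).lt_of_ne (Ne.symm (pow_ne_zero 2 hfe))
      nlinarith
    · push_neg at hg0
      obtain ⟨x, hx, hx0⟩ := hg0
      have hlt : QF G g < 0 := by
        refine hG g ?_ ⟨x, hx0⟩
        intro y hy
        by_cases hye : y = e
        · simp [hgdef, hye]
        · have : y ∉ G'.verts := by rw [hV]; simp [hye, hy]
          have := hsupp y this
          simp [hgdef, hye, this]
      rw [hQ']
      nlinarith [sq_nonneg (c f - f e)]
  · intro hG' g hsupp hne0
    set f : ℕ → ℤ := fun x => if x = e then c g else g x with hfdef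
    have hg : ∀ a ∈ G.verts, g a = f a := by
      intro a ha
      simp only [hfdef]
      rw [if_neg (fun hae : a = e => he (hae ▸ ha))]
    have hfe : f e = c f := by
      simp only [hfdef, if_pos rfl]
      exact (hc f g hg).symm
    have hQ' := hQ f g hg
    rw [hfe, sub_self] at hQ'
    have hlt : QF G' f < 0 := by
      refine hG' f ?_ ?_
      · intro y hy
        rw [hV] at hy
        simp only [Finset.mem_insert, not_or] at hy
        simp [hfdef, hy.1, hsupp y hy.2]
      · obtain ⟨x, hx⟩ := hne0
        have hxv : x ∈ G.verts := by
          by_contra hxv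
          exact hx (hsupp x hxv)
        exact ⟨x, by rw [← hg x hxv]; exact hx⟩
    rw [hQ'] at hlt
    simpa using hlt

lemma negDef_iff_blowup {G G' : WGraph} (h : IsBlowup G G') : NegDef G ↔ NegDef G' := by
  rcases h with ⟨e, hfree⟩ | ⟨u, e, hvert⟩ | ⟨u₁, u₂, e, hedge⟩
  · exact negDef_iff_of_formula hfree.1 hfree.2.1 (fun _ => 0) (fun _ _ _ => rfl)
      (fun _ _ => rfl) (fun f g hg => QF_free hfree f g hg)
  · have hu : u ∈ G.verts := hvert.1
    exact negDef_iff_of_formula hvert.2.1 hvert.2.2.1 (fun f => f u)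
      (fun f g hg => (hg u hu).symm) (fun g hg => hg u hu)
      (fun f g hg => QF_vertex hvert f g hg)
  · have hu1 : u₁ ∈ G.verts := (G.support _ _ hedge.1).1
    have hu2 : u₂ ∈ G.verts := (G.support _ _ hedge.1).2
    exact negDef_iff_of_formula hedge.2.1 hedge.2.2.1 (fun f => f u₁ + f u₂)
      (fun f g hg => by show f u₁ + f u₂ = g u₁ + g u₂; rw [hg u₁ hu1, hg u₂ hu2])
      (fun g hg => by show g u₁ + g u₂ = 0; rw [hg u₁ hu1, hg u₂ hu2, add_zero])
      (fun f g hg => QF_edge hedge f g hg)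

lemma negDef_of_wequiv {G H : WGraph} (h : WEquiv G H) : NegDef G ↔ NegDef H := by
  induction h with
  | rel _ _ hr => exact negDef_iff_blowup hr
  | refl _ => exact Iff.rfl
  | symm _ _ _ ih => exact ih.symm
  | trans _ _ _ _ _ ih1 ih2 => exact ih1.trans ih2

lemma negDef_of_empty {H : WGraph} (h : H.verts = ∅) : NegDef H := by
  intro f hsupp ⟨x, hx⟩
  exact absurd (hsupp x (by simp [h])) hx

lemma not_negDef_of_nonneg {G : WGraph} {w : ℕ} (hw : w ∈ G.verts)
    (h0 : 0 ≤ G.weight w) : ¬ NegDef G := by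
  classical
  intro hG
  set f : ℕ → ℤ := fun x => if x = w then 1 else 0 with hfdef
  have hlt := hG f (fun x hx => by
      simp only [hfdef]
      rw [if_neg (fun hxw : x = w => hx (hxw ▸ hw))])
    ⟨w, by simp [hfdef]⟩
  have hq : QF G f = G.weight w := by
    unfold QF
    have hd : ∑ a ∈ G.verts, f a ^ 2 * G.weight a = G.weight w := by
      have : ∀ a ∈ G.verts, f a ^ 2 * G.weight a
          = (if a = w then G.weight a else 0) := by
        intro a _
        simp only [hfdef]
        by_cases haw : a = w
        · rw [if_pos haw, if_pos haw]; ring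
        · rw [if_neg haw, if_neg haw]; ring
      rw [Finset.sum_congr rfl this, Finset.sum_ite_eq' G.verts w (fun a => G.weight a),
        if_pos hw]
    have hcross : (∑ a ∈ G.verts, ∑ b ∈ G.verts, if G.Adj a b then f a * f b else 0) = 0 := by
      refine Finset.sum_eq_zero fun a _ => Finset.sum_eq_zero fun b _ => ?_
      by_cases hab : G.Adj a b
      · rw [if_pos hab]
        by_cases haw : a = w
        · have hbw : b ≠ w := by
            intro hbw
            rw [haw, ← hbw] at hab
            exact G.loopless b hab
          simp [hfdef, hbw]
        · simp [hfdef, haw]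
      · rw [if_neg hab]
    rw [hd, hcross, add_zero]
  rw [hq] at hlt
  exact absurd hlt (not_lt.mpr h0)

/-- A pair blowup does not disturb a far-away vertex. -/
lemma pairBlowup_far {G : WGraph} {v : ℕ} {G' : WGraph} {v' : ℕ} {w : ℕ}
    (h : PairBlowup G v G' v') (hw : w ∈ G.verts) (hwv : w ≠ v)
    (hadj : ¬ G.Adj v w) :
    w ∈ G'.verts ∧ w ≠ v' ∧ ¬ G'.Adj v' w ∧ G'.weight w = G.weight w := by
  rcases h with ⟨hv, he, hV, hAdj, hwt⟩ | ⟨u, hvu, hadj', he, hV, hAdj, hwt⟩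
  · have hwe : w ≠ v' := fun hwe => he (hwe ▸ hw)
    refine ⟨by rw [hV]; exact Finset.mem_insert_of_mem hw, hwe, ?_, ?_⟩
    · intro hA
      rcases (hAdj v' w).mp hA with hab | ⟨hv'v, -⟩ | ⟨-, hwv'⟩
      · exact he (G.support _ _ hab).1
      · exact he (hv'v ▸ hv)
      · exact hwv hwv'
    · rw [hwt, if_neg hwe, if_neg hwv]
  · have hwe : w ≠ v' := fun hwe => he (hwe ▸ hw)
    have hwu : w ≠ u := fun hwu => hadj (hwu ▸ hvu)
    refine ⟨by rw [hV]; exact Finset.mem_insert_of_mem hw, hwe, ?_, ?_⟩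
    · intro hA
      rcases (hAdj v' w).mp hA with ⟨hab, -⟩ | ⟨-, (hwv' | hwu')⟩ | ⟨hwv', -⟩
      · exact he (G.support _ _ hab).1
      · exact hwv hwv'
      · exact hwu hwu'
      · exact hwe hwv'
    · rw [hwt, if_neg hwe, if_neg hwv, if_neg hwu]

/-- If `G` has a vertex `w` of nonnegative weight with `w ≠ v` and `w` not a
neighbour of `v`, then the weighted pair `(G, v)` is not erasable. -/
theorem not_erasable_of_nonneg_far_vertex
    (G : WGraph) (v : ℕ) (hv : v ∈ G.verts)
    (w : ℕ) (hw : w ∈ G.verts) (hwv : w ≠ v) (hadj : ¬ G.Adj v w)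
    (hweight : 0 ≤ G.weight w) :
    ¬ Erasable G v := by
  rintro ⟨n, Gs, es, h0, he0, hstep, H, hdel, K, hHK, hK⟩
  have key : ∀ i, i ≤ n → w ∈ (Gs i).verts ∧ w ≠ es i ∧ ¬ (Gs i).Adj (es i) w ∧
      (Gs i).weight w = G.weight w := by
    intro i
    induction i with
    | zero => intro _; rw [h0, he0]; exact ⟨hw, hwv, hadj, rfl⟩
    | succ j ih =>
      intro hj
      obtain ⟨h1, h2, h3, h4⟩ := ih (Nat.le_of_succ_le hj)
      obtain ⟨g1, g2, g3, g4⟩ := pairBlowup_far (hstep j (Nat.lt_of_succ_le hj)) h1 h2 h3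
      exact ⟨g1, g2, g3, g4.trans h4⟩
  obtain ⟨h1, h2, h3, h4⟩ := key n le_rfl
  obtain ⟨hHv, hHadj, hHw⟩ := hdel
  have hwH : w ∈ H.verts := by rw [hHv]; exact Finset.mem_erase.mpr ⟨h2, h1⟩
  have hnd : ¬ NegDef H := not_negDef_of_nonneg hwH (by rw [hHw, h4]; exact hweight)
  exact hnd ((negDef_of_wequiv hHK).mpr (negDef_of_empty hK))
end

section
/- With weighted pairs and erasability defined as in the paper: if G has at least two vertices, the distinguished vertex v has negative weight, and every vertex of G other than v has weight strictly less than -1, then the weighted pair (G, v) is not erasable. -/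
namespace NotErasableAux

/-- Structural equality up to weights outside the vertex set. -/
def WEqv (G G' : WGraph) : Prop :=
  G.verts = G'.verts ∧ (∀ a b, G.Adj a b ↔ G'.Adj a b) ∧
    ∀ x ∈ G'.verts, G.weight x = G'.weight x

lemma WGraph.ext' (G G' : WGraph) (hv : G.verts = G'.verts)
    (ha : ∀ a b, G.Adj a b ↔ G'.Adj a b) (hw : ∀ x, G.weight x = G'.weight x) : G = G' := by
  obtain ⟨v, A, s, l, sup, w⟩ := G
  obtain ⟨v', A', s', l', sup', w'⟩ := G'
  simp only at hv ha hw
  have hA : A = A' := by funext a b; exact propext (ha a b)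
  subst hv hA
  have : w = w' := funext hw
  subst this
  rfl

/-- A chain of blowups starting from an empty graph. -/
def Chain (Gs : ℕ → WGraph) (n : ℕ) : Prop :=
  (Gs 0).verts = ∅ ∧ ∀ i, i < n → IsBlowup (Gs i) (Gs (i + 1))

/-- `G` is obtained from an empty weighted graph by a sequence of blowups. -/
def Constructible (G : WGraph) : Prop := ∃ n Gs, Chain Gs n ∧ Gs n = G

lemma blowup_created (K K' : WGraph) (h : IsBlowup K K') :
    ∃ e, e ∉ K.verts ∧ K'.verts = insert e K.verts ∧ K'.weight e = -1 ∧
      ∀ x ∈ K.verts, K'.weight x ≤ K.weight x := by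
  rcases h with ⟨e, he, hv, _, hw⟩ | ⟨u, e, hu, he, hv, _, hw⟩ | ⟨u₁, u₂, e, hadj, he, hv, _, hw⟩
  · refine ⟨e, he, hv, by simp [hw], fun x hx => ?_⟩
    rw [hw]; have : x ≠ e := fun h => he (h ▸ hx); simp [this]
  · refine ⟨e, he, hv, by simp [hw], fun x hx => ?_⟩
    rw [hw]; have : x ≠ e := fun h => he (h ▸ hx)
    by_cases hxu : x = u <;> simp [this, hxu] <;> omega
  · refine ⟨e, he, hv, by simp [hw], fun x hx => ?_⟩
    rw [hw]; have : x ≠ e := fun h => he (h ▸ hx)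
    by_cases h1 : x = u₁ <;> by_cases h2 : x = u₂ <;> simp [this, h1, h2] <;> omega

lemma chain_weight_le (Gs : ℕ → WGraph) (n : ℕ) (h : Chain Gs n) :
    ∀ x ∈ (Gs n).verts, (Gs n).weight x ≤ -1 := by
  induction n with
  | zero => intro x hx; rw [h.1] at hx; exact absurd hx (Finset.notMem_empty x)
  | succ n ih =>
    have hstep := h.2 n (Nat.lt_succ_self n)
    obtain ⟨e, he, hv, hwe, hmono⟩ := blowup_created _ _ hstep
    have ihn := ih ⟨h.1, fun i hi => h.2 i (hi.trans (Nat.lt_succ_self n))⟩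
    intro x hx
    rw [hv] at hx
    rcases Finset.mem_insert.mp hx with rfl | hx
    · omega
    · exact le_trans (hmono x hx) (ihn x hx)

lemma constructible_exists_neg_one (G : WGraph) (hC : Constructible G)
    (hne : G.verts.Nonempty) : ∃ x ∈ G.verts, G.weight x = -1 := by
  obtain ⟨n, Gs, hch, rfl⟩ := hC
  cases n with
  | zero => rw [hch.1] at hne; exact absurd hne (by simp)
  | succ n =>
    obtain ⟨e, _, hv, hwe, _⟩ := blowup_created _ _ (hch.2 n (Nat.lt_succ_self n))
    exact ⟨e, by rw [hv]; exact Finset.mem_insert_self e _, hwe⟩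


/-- Patch the weight function of a graph outside its vertex set. -/
def patchW (w : ℕ → ℤ) (K : WGraph) : WGraph :=
  ⟨K.verts, K.Adj, K.symm, K.loopless, K.support,
    fun x => if x ∈ K.verts then K.weight x else w x⟩

lemma isBlowup_patch (w : ℕ → ℤ) (K K' : WGraph) (h : IsBlowup K K') :
    IsBlowup (patchW w K) (patchW w K') := by
  rcases h with ⟨e, he, hv, ha, hw⟩ | ⟨u, e, hu, he, hv, ha, hw⟩ |
    ⟨u₁, u₂, e, hadj, he, hv, ha, hw⟩
  · refine Or.inl ⟨e, he, hv, ha, fun x => ?_⟩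
    show (if x ∈ K'.verts then K'.weight x else w x) = _
    by_cases hx : x ∈ K'.verts
    · rw [if_pos hx, hw]
      by_cases hxe : x = e
      · simp [hxe]
      · have hxk : x ∈ K.verts := by
          rw [hv] at hx; rcases Finset.mem_insert.mp hx with h | h; exact absurd h hxe; exact h
        simp [hxe, patchW, hxk]
    · have hxe : x ≠ e := by rintro rfl; exact hx (by rw [hv]; exact Finset.mem_insert_self _ _)
      have hxk : x ∉ K.verts := fun hk => hx (by rw [hv]; exact Finset.mem_insert_of_mem hk)
      simp [hx, hxe, patchW, hxk]
  · refine Or.inr (Or.inl ⟨u, e, hu, he, hv, ha, fun x => ?_⟩)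
    show (if x ∈ K'.verts then K'.weight x else w x) = _
    have hpu : (patchW w K).weight u = K.weight u := by simp [patchW, hu]
    by_cases hx : x ∈ K'.verts
    · rw [if_pos hx, hw]
      by_cases hxe : x = e
      · simp [hxe]
      · have hxk : x ∈ K.verts := by
          rw [hv] at hx; rcases Finset.mem_insert.mp hx with h | h; exact absurd h hxe; exact h
        by_cases hxu : x = u <;> simp [hxe, hxu, patchW, hxk, hu]
    · have hxe : x ≠ e := by rintro rfl; exact hx (by rw [hv]; exact Finset.mem_insert_self _ _)
      have hxk : x ∉ K.verts := fun hk => hx (by rw [hv]; exact Finset.mem_insert_of_mem hk)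
      have hxu : x ≠ u := by rintro rfl; exact hxk hu
      simp [hx, hxe, hxu, patchW, hxk]
  · have hu1 : u₁ ∈ K.verts := (K.support _ _ hadj).1
    have hu2 : u₂ ∈ K.verts := (K.support _ _ hadj).2
    refine Or.inr (Or.inr ⟨u₁, u₂, e, hadj, he, hv, ha, fun x => ?_⟩)
    show (if x ∈ K'.verts then K'.weight x else w x) = _
    by_cases hx : x ∈ K'.verts
    · rw [if_pos hx, hw]
      by_cases hxe : x = e
      · simp [hxe]
      · have hxk : x ∈ K.verts := by
          rw [hv] at hx; rcases Finset.mem_insert.mp hx with h | h; exact absurd h hxe; exact h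
        by_cases h1 : x = u₁ <;> by_cases h2 : x = u₂ <;>
          simp [hxe, h1, h2, patchW, hxk, hu1, hu2]
    · have hxe : x ≠ e := by rintro rfl; exact hx (by rw [hv]; exact Finset.mem_insert_self _ _)
      have hxk : x ∉ K.verts := fun hk => hx (by rw [hv]; exact Finset.mem_insert_of_mem hk)
      have h1 : x ≠ u₁ := by rintro rfl; exact hxk hu1
      have h2 : x ≠ u₂ := by rintro rfl; exact hxk hu2
      simp [hx, hxe, h1, h2, patchW, hxk]

lemma constructible_of_weqv (G G' : WGraph) (hC : Constructible G) (h : WEqv G G') :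
    Constructible G' := by
  obtain ⟨n, Gs, hch, rfl⟩ := hC
  refine ⟨n, fun i => patchW G'.weight (Gs i), ⟨hch.1, fun i hi => isBlowup_patch _ _ _ (hch.2 i hi)⟩, ?_⟩
  refine WGraph.ext' _ _ h.1 h.2.1 fun x => ?_
  show (if x ∈ (Gs n).verts then (Gs n).weight x else G'.weight x) = _
  by_cases hx : x ∈ (Gs n).verts
  · rw [if_pos hx]; exact h.2.2 x (h.1 ▸ hx)
  · rw [if_neg hx]


/-- Rename the vertices of a weighted graph along a permutation of `ℕ`. -/
def ren (σ : Equiv.Perm ℕ) (K : WGraph) : WGraph where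
  verts := K.verts.image σ
  Adj a b := K.Adj (σ.symm a) (σ.symm b)
  symm a b h := K.symm _ _ h
  loopless a h := K.loopless _ h
  support a b h := by
    obtain ⟨h1, h2⟩ := K.support _ _ h
    constructor
    · exact Finset.mem_image.mpr ⟨σ.symm a, h1, by simp⟩
    · exact Finset.mem_image.mpr ⟨σ.symm b, h2, by simp⟩
  weight x := K.weight (σ.symm x)

lemma mem_ren_verts (σ : Equiv.Perm ℕ) (K : WGraph) (x : ℕ) :
    x ∈ (ren σ K).verts ↔ σ.symm x ∈ K.verts := by
  constructor
  · intro h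
    obtain ⟨y, hy, rfl⟩ := Finset.mem_image.mp h
    simpa using hy
  · intro h
    exact Finset.mem_image.mpr ⟨σ.symm x, h, by simp⟩

lemma ren_verts_insert (σ : Equiv.Perm ℕ) (s : Finset ℕ) (e : ℕ) :
    (insert e s).image σ = insert (σ e) (s.image σ) := Finset.image_insert σ e s

lemma isBlowup_ren (σ : Equiv.Perm ℕ) (K K' : WGraph) (h : IsBlowup K K') :
    IsBlowup (ren σ K) (ren σ K') := by
  rcases h with ⟨e, he, hv, ha, hw⟩ | ⟨u, e, hu, he, hv, ha, hw⟩ |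
    ⟨u₁, u₂, e, hadj, he, hv, ha, hw⟩
  · refine Or.inl ⟨σ e, ?_, ?_, fun a b => ha _ _, fun x => ?_⟩
    · rw [mem_ren_verts]; simpa using he
    · show K'.verts.image σ = _; rw [hv, ren_verts_insert]; rfl
    · show K'.weight (σ.symm x) = if x = σ e then -1 else K.weight (σ.symm x)
      rw [hw]
      have : σ.symm x = e ↔ x = σ e := by
        constructor
        · intro h; rw [← h]; simp
        · intro h; rw [h]; simp
      by_cases hc : x = σ e
      · simp [hc]
      · rw [if_neg (fun hh => hc (this.mp hh)), if_neg hc]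
  · refine Or.inr (Or.inl ⟨σ u, σ e, ?_, ?_, ?_, fun a b => ?_, fun x => ?_⟩)
    · rw [mem_ren_verts]; simpa using hu
    · rw [mem_ren_verts]; simpa using he
    · show K'.verts.image σ = _; rw [hv, ren_verts_insert]; rfl
    · show K'.Adj _ _ ↔ K.Adj _ _ ∨ _
      rw [ha]
      have h1 : σ.symm a = u ↔ a = σ u := by
        constructor; (intro h; rw [← h]; simp); (intro h; rw [h]; simp)
      have h2 : σ.symm b = e ↔ b = σ e := by
        constructor; (intro h; rw [← h]; simp); (intro h; rw [h]; simp)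
      have h3 : σ.symm a = e ↔ a = σ e := by
        constructor; (intro h; rw [← h]; simp); (intro h; rw [h]; simp)
      have h4 : σ.symm b = u ↔ b = σ u := by
        constructor; (intro h; rw [← h]; simp); (intro h; rw [h]; simp)
      rw [h1, h2, h3, h4]
    · show K'.weight (σ.symm x) = _
      rw [hw]
      have h2 : σ.symm x = e ↔ x = σ e := by
        constructor; (intro h; rw [← h]; simp); (intro h; rw [h]; simp)
      have h1 : σ.symm x = u ↔ x = σ u := by
        constructor; (intro h; rw [← h]; simp); (intro h; rw [h]; simp)
      show _ = if x = σ e then -1 else if x = σ u then (ren σ K).weight (σ u) - 1 else (ren σ K).weight x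
      have hren : (ren σ K).weight (σ u) = K.weight u := by
        show K.weight (σ.symm (σ u)) = _; simp
      rw [hren]
      by_cases hc : x = σ e
      · simp [hc, h2.mpr hc]
      · rw [if_neg (fun hh => hc (h2.mp hh)), if_neg hc]
        by_cases hd : x = σ u
        · rw [if_pos (h1.mpr hd), if_pos hd]
        · rw [if_neg (fun hh => hd (h1.mp hh)), if_neg hd]; rfl
  · refine Or.inr (Or.inr ⟨σ u₁, σ u₂, σ e, ?_, ?_, ?_, fun a b => ?_, fun x => ?_⟩)
    · show K.Adj (σ.symm (σ u₁)) (σ.symm (σ u₂)); simpa using hadj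
    · rw [mem_ren_verts]; simpa using he
    · show K'.verts.image σ = _; rw [hv, ren_verts_insert]; rfl
    · show K'.Adj _ _ ↔ _
      rw [ha]
      have hgen : ∀ y z : ℕ, σ.symm y = z ↔ y = σ z := by
        intro y z
        constructor; (intro h; rw [← h]; simp); (intro h; rw [h]; simp)
      rw [hgen a u₁, hgen b u₂, hgen a u₂, hgen b u₁, hgen a e, hgen b e]
      rfl
    · show K'.weight (σ.symm x) = _
      rw [hw]
      have hgen : ∀ z : ℕ, σ.symm x = z ↔ x = σ z := by
        intro z
        constructor; (intro h; rw [← h]; simp); (intro h; rw [h]; simp)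
      have hr1 : (ren σ K).weight (σ u₁) = K.weight u₁ := by
        show K.weight (σ.symm (σ u₁)) = _; simp
      have hr2 : (ren σ K).weight (σ u₂) = K.weight u₂ := by
        show K.weight (σ.symm (σ u₂)) = _; simp
      show _ = if x = σ e then -1 else if x = σ u₁ then (ren σ K).weight (σ u₁) - 1
        else if x = σ u₂ then (ren σ K).weight (σ u₂) - 1 else (ren σ K).weight x
      rw [hr1, hr2]
      by_cases hc : x = σ e
      · simp [hc, (hgen e).mpr hc]
      · rw [if_neg (fun hh => hc ((hgen e).mp hh)), if_neg hc]
        by_cases hd : x = σ u₁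
        · rw [if_pos ((hgen u₁).mpr hd), if_pos hd]
        · rw [if_neg (fun hh => hd ((hgen u₁).mp hh)), if_neg hd]
          by_cases he2 : x = σ u₂
          · rw [if_pos ((hgen u₂).mpr he2), if_pos he2]
          · rw [if_neg (fun hh => he2 ((hgen u₂).mp hh)), if_neg he2]; rfl

lemma constructible_ren (σ : Equiv.Perm ℕ) (G : WGraph) (hC : Constructible G) :
    Constructible (ren σ G) := by
  obtain ⟨n, Gs, hch, rfl⟩ := hC
  exact ⟨n, fun i => ren σ (Gs i),
    ⟨by show (Gs 0).verts.image σ = ∅; rw [hch.1]; simp,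
     fun i hi => isBlowup_ren σ _ _ (hch.2 i hi)⟩, rfl⟩

lemma constructible_extend (G G' : WGraph) (hC : Constructible G) (h : IsBlowup G G') :
    Constructible G' := by
  obtain ⟨n, Gs, hch, rfl⟩ := hC
  refine ⟨n + 1, fun i => if i < n + 1 then Gs i else G', ⟨by simp [hch.1], fun i hi => ?_⟩, by simp⟩
  rcases Nat.lt_succ_iff_lt_or_eq.mp hi with hi' | rfl
  · have : i < n + 1 := hi'.trans (Nat.lt_succ_self n)
    simp only [this, Nat.succ_lt_succ hi', if_true]
    exact hch.2 i hi'
  · simp only [Nat.lt_succ_self, if_true, Nat.lt_irrefl, if_false]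
    exact h

/-! ### Inversion lemmas: recovering the blown-down graph's structure -/

lemma adj_ne_of_notMem (G : WGraph) (e a b : ℕ) (he : e ∉ G.verts) (h : G.Adj a b) :
    a ≠ e ∧ b ≠ e := by
  obtain ⟨h1, h2⟩ := G.support _ _ h
  exact ⟨fun hh => he (hh ▸ h1), fun hh => he (hh ▸ h2)⟩

lemma not_adj_left (G : WGraph) (e x : ℕ) (he : e ∉ G.verts) : ¬ G.Adj e x :=
  fun h => he (G.support _ _ h).1

lemma freeBlowup_inv_adj (G G' : WGraph) (e : ℕ) (h : IsFreeBlowup G G' e) :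
    ∀ a b, G.Adj a b ↔ (a ≠ e ∧ b ≠ e ∧ (G'.Adj a b ∨ False)) := by
  obtain ⟨he, hv, ha, hw⟩ := h
  intro a b
  constructor
  · intro hadj
    obtain ⟨h1, h2⟩ := adj_ne_of_notMem G e a b he hadj
    exact ⟨h1, h2, Or.inl ((ha a b).mpr hadj)⟩
  · rintro ⟨h1, h2, hadj | hF⟩
    · exact (ha a b).mp hadj
    · exact hF.elim

lemma vertexBlowup_inv_adj (G G' : WGraph) (u e : ℕ) (h : IsVertexBlowup G G' u e) :
    ∀ a b, G.Adj a b ↔ (a ≠ e ∧ b ≠ e ∧ (G'.Adj a b ∨ False)) := by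
  obtain ⟨hu, he, hv, ha, hw⟩ := h
  intro a b
  constructor
  · intro hadj
    obtain ⟨h1, h2⟩ := adj_ne_of_notMem G e a b he hadj
    exact ⟨h1, h2, Or.inl ((ha a b).mpr (Or.inl hadj))⟩
  · rintro ⟨h1, h2, hadj | hF⟩
    · rcases (ha a b).mp hadj with h | ⟨_, rfl⟩ | ⟨rfl, _⟩
      · exact h
      · exact absurd rfl h2
      · exact absurd rfl h1
    · exact hF.elim

lemma edgeBlowup_inv_adj (G G' : WGraph) (u₁ u₂ e : ℕ) (h : IsEdgeBlowup G G' u₁ u₂ e) :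
    ∀ a b, G.Adj a b ↔ (a ≠ e ∧ b ≠ e ∧
      (G'.Adj a b ∨ ((a = u₁ ∧ b = u₂) ∨ (a = u₂ ∧ b = u₁)))) := by
  obtain ⟨hadj12, he, hv, ha, hw⟩ := h
  intro a b
  constructor
  · intro hadj
    obtain ⟨h1, h2⟩ := adj_ne_of_notMem G e a b he hadj
    refine ⟨h1, h2, ?_⟩
    by_cases hp : (a = u₁ ∧ b = u₂) ∨ (a = u₂ ∧ b = u₁)
    · exact Or.inr hp
    · push_neg at hp
      exact Or.inl ((ha a b).mpr (Or.inl ⟨hadj, fun hh => (hp.1 hh.1) hh.2,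
        fun hh => (hp.2 hh.1) hh.2⟩))
  · rintro ⟨h1, h2, hadj | hp⟩
    · rcases (ha a b).mp hadj with ⟨h, _, _⟩ | ⟨rfl, _⟩ | ⟨rfl, _⟩
      · exact h
      · exact absurd rfl h1
      · exact absurd rfl h2
    · rcases hp with ⟨rfl, rfl⟩ | ⟨rfl, rfl⟩
      · exact hadj12
      · exact G.symm _ _ hadj12

/-! ### Neighbourhoods of the created vertex -/

lemma freeBlowup_e_adj (G G' : WGraph) (e : ℕ) (h : IsFreeBlowup G G' e) :
    ∀ x, ¬ G'.Adj e x := by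
  obtain ⟨he, hv, ha, hw⟩ := h
  intro x hx
  exact not_adj_left G e x he ((ha e x).mp hx)

lemma vertexBlowup_e_adj (G G' : WGraph) (u e : ℕ) (h : IsVertexBlowup G G' u e) :
    ∀ x, G'.Adj e x ↔ x = u := by
  obtain ⟨hu, he, hv, ha, hw⟩ := h
  have hue : u ≠ e := fun hh => he (hh ▸ hu)
  intro x
  constructor
  · intro hx
    rcases (ha e x).mp hx with h | ⟨h1, _⟩ | ⟨_, h2⟩
    · exact absurd h (not_adj_left G e x he)
    · exact absurd h1.symm hue
    · exact h2
  · rintro rfl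
    exact (ha e x).mpr (Or.inr (Or.inr ⟨rfl, rfl⟩))

lemma edgeBlowup_e_adj (G G' : WGraph) (u₁ u₂ e : ℕ) (h : IsEdgeBlowup G G' u₁ u₂ e) :
    ∀ x, G'.Adj e x ↔ (x = u₁ ∨ x = u₂) := by
  obtain ⟨hadj12, he, hv, ha, hw⟩ := h
  obtain ⟨hu1, hu2⟩ := G.support _ _ hadj12
  have h1e : u₁ ≠ e := fun hh => he (hh ▸ hu1)
  have h2e : u₂ ≠ e := fun hh => he (hh ▸ hu2)
  intro x
  constructor
  · intro hx
    rcases (ha e x).mp hx with ⟨h, _, _⟩ | ⟨_, h2⟩ | ⟨_, h2 | h2⟩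
    · exact absurd h (not_adj_left G e x he)
    · exact h2
    · exact absurd h2.symm h1e
    · exact absurd h2.symm h2e
  · intro hx
    exact (ha e x).mpr (Or.inr (Or.inl ⟨rfl, hx⟩))

/-! ### Weight inversion -/

lemma freeBlowup_inv_w (G G' : WGraph) (e : ℕ) (h : IsFreeBlowup G G' e) :
    ∀ x, x ≠ e → G.weight x = G'.weight x + 0 := by
  intro x hx; rw [h.2.2.2 x, if_neg hx]; ring

lemma vertexBlowup_inv_w (G G' : WGraph) (u e : ℕ) (h : IsVertexBlowup G G' u e) :
    ∀ x, x ≠ e → G.weight x = G'.weight x + (if x = u then 1 else 0) := by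
  intro x hx
  rw [h.2.2.2.2 x, if_neg hx]
  by_cases hu : x = u <;> simp [hu]

lemma edgeBlowup_inv_w (G G' : WGraph) (u₁ u₂ e : ℕ) (h : IsEdgeBlowup G G' u₁ u₂ e) :
    ∀ x, x ≠ e → G.weight x = G'.weight x +
      (if x = u₁ then 1 else if x = u₂ then 1 else 0) := by
  intro x hx
  rw [h.2.2.2.2 x, if_neg hx]
  by_cases h1 : x = u₁
  · subst h1; simp
  · rw [if_neg h1, if_neg h1]
    by_cases h2 : x = u₂ <;> simp [h2]

lemma edgeBlowup_comm (G G' : WGraph) (u₁ u₂ e : ℕ) (h : IsEdgeBlowup G G' u₁ u₂ e) :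
    IsEdgeBlowup G G' u₂ u₁ e := by
  obtain ⟨hadj12, he, hv, ha, hw⟩ := h
  have h12 : u₁ ≠ u₂ := fun hh => G.loopless u₁ (hh ▸ hadj12)
  refine ⟨G.symm _ _ hadj12, he, hv, fun a b => ?_, fun x => ?_⟩
  · rw [ha a b]; tauto
  · rw [hw x]
    by_cases hx : x = e
    · simp [hx]
    · rw [if_neg hx, if_neg hx]
      by_cases h1 : x = u₁ <;> by_cases h2 : x = u₂
      · exact absurd (h1 ▸ h2 ▸ rfl : u₁ = u₂) h12
      all_goals simp [h1, h2, h12, h12.symm]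

/-! ### Stage 1: blowing down `G₁` at a vertex `f` of weight `-1` -/

lemma stage1_free (G₁ : WGraph) (f : ℕ) (wj : ℤ)
    (hf : f ∈ G₁.verts) (hwf : G₁.weight f = -1)
    (hnb : ∀ x, ¬ G₁.Adj f x) :
    ∃ G₀ : WGraph, IsFreeBlowup G₀ G₁ f ∧ G₀.verts = G₁.verts.erase f ∧
      (∀ a b, G₀.Adj a b ↔ ((G₁.Adj a b ∧ a ≠ f ∧ b ≠ f) ∨ False)) ∧
      (∀ x, x ≠ f → G₀.weight x = G₁.weight x + 0) ∧ G₀.weight f = wj := by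
  refine ⟨⟨G₁.verts.erase f, fun x y => G₁.Adj x y ∧ x ≠ f ∧ y ≠ f,
    fun a b h => ⟨G₁.symm _ _ h.1, h.2.2, h.2.1⟩,
    fun a h => G₁.loopless a h.1,
    fun a b h => ⟨Finset.mem_erase.mpr ⟨h.2.1, (G₁.support _ _ h.1).1⟩,
      Finset.mem_erase.mpr ⟨h.2.2, (G₁.support _ _ h.1).2⟩⟩,
    fun x => if x = f then wj else G₁.weight x⟩,
    ⟨Finset.notMem_erase f _, (Finset.insert_erase hf).symm, fun a b => ?_, fun x => ?_⟩,
    rfl, fun a b => by simp, fun x hx => by simp [hx], by simp⟩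
  · show G₁.Adj a b ↔ G₁.Adj a b ∧ a ≠ f ∧ b ≠ f
    constructor
    · intro h
      refine ⟨h, fun hh => hnb b (hh ▸ h), fun hh => hnb a (hh ▸ G₁.symm _ _ h)⟩
    · exact fun h => h.1
  · show G₁.weight x = if x = f then -1 else _
    by_cases hx : x = f
    · simp [hx, hwf]
    · simp [hx]

lemma stage1_vertex (G₁ : WGraph) (f a : ℕ) (wj : ℤ)
    (hf : f ∈ G₁.verts) (hwf : G₁.weight f = -1)
    (hnb : ∀ x, G₁.Adj f x ↔ x = a) :
    ∃ G₀ : WGraph, IsVertexBlowup G₀ G₁ a f ∧ G₀.verts = G₁.verts.erase f ∧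
      (∀ a' b, G₀.Adj a' b ↔ ((G₁.Adj a' b ∧ a' ≠ f ∧ b ≠ f) ∨ False)) ∧
      (∀ x, x ≠ f → G₀.weight x = G₁.weight x + (if x = a then 1 else 0)) ∧
      G₀.weight f = wj := by
  have haf : G₁.Adj f a := (hnb a).mpr rfl
  have hane : a ≠ f := fun hh => G₁.loopless f (hh ▸ haf)
  have haV : a ∈ G₁.verts := (G₁.support _ _ haf).2
  refine ⟨⟨G₁.verts.erase f, fun x y => G₁.Adj x y ∧ x ≠ f ∧ y ≠ f,
    fun a b h => ⟨G₁.symm _ _ h.1, h.2.2, h.2.1⟩,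
    fun a h => G₁.loopless a h.1,
    fun a b h => ⟨Finset.mem_erase.mpr ⟨h.2.1, (G₁.support _ _ h.1).1⟩,
      Finset.mem_erase.mpr ⟨h.2.2, (G₁.support _ _ h.1).2⟩⟩,
    fun x => if x = f then wj else if x = a then G₁.weight a + 1 else G₁.weight x⟩,
    ⟨Finset.mem_erase.mpr ⟨hane, haV⟩, Finset.notMem_erase f _,
      (Finset.insert_erase hf).symm, fun x y => ?_, fun x => ?_⟩,
    rfl, fun a' b => by simp, fun x hx => ?_, by simp⟩
  · show G₁.Adj x y ↔ (G₁.Adj x y ∧ x ≠ f ∧ y ≠ f) ∨ (x = a ∧ y = f) ∨ (x = f ∧ y = a)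
    constructor
    · intro h
      by_cases hx : x = f
      · subst hx; exact Or.inr (Or.inr ⟨rfl, (hnb y).mp h⟩)
      · by_cases hy : y = f
        · subst hy
          exact Or.inr (Or.inl ⟨(hnb x).mp (G₁.symm _ _ h), rfl⟩)
        · exact Or.inl ⟨h, hx, hy⟩
    · rintro (⟨h, _, _⟩ | ⟨rfl, rfl⟩ | ⟨rfl, rfl⟩)
      · exact h
      · exact G₁.symm _ _ haf
      · exact haf
  · show G₁.weight x = if x = f then -1 else if x = a then _ - 1 else _
    by_cases hx : x = f
    · simp [hx, hwf]
    · rw [if_neg hx]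
      by_cases hxa : x = a
      · subst hxa; simp [hane]
      · simp [hxa, hx]
  · show (if x = f then wj else if x = a then G₁.weight a + 1 else G₁.weight x) = _
    rw [if_neg hx]
    by_cases hxa : x = a
    · subst hxa; simp
    · simp [hxa]

lemma stage1_edge (G₁ : WGraph) (f a b : ℕ) (wj : ℤ)
    (hf : f ∈ G₁.verts) (hwf : G₁.weight f = -1)
    (hnb : ∀ x, G₁.Adj f x ↔ (x = a ∨ x = b))
    (hab : a ≠ b) (hnadj : ¬ G₁.Adj a b) :
    ∃ G₀ : WGraph, IsEdgeBlowup G₀ G₁ a b f ∧ G₀.verts = G₁.verts.erase f ∧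
      (∀ a' b', G₀.Adj a' b' ↔ ((G₁.Adj a' b' ∧ a' ≠ f ∧ b' ≠ f) ∨
        ((a' = a ∧ b' = b) ∨ (a' = b ∧ b' = a)))) ∧
      (∀ x, x ≠ f → G₀.weight x = G₁.weight x + (if x = a then 1 else if x = b then 1 else 0)) ∧
      G₀.weight f = wj := by
  have haf : G₁.Adj f a := (hnb a).mpr (Or.inl rfl)
  have hbf : G₁.Adj f b := (hnb b).mpr (Or.inr rfl)
  have hane : a ≠ f := fun hh => G₁.loopless f (hh ▸ haf)
  have hbne : b ≠ f := fun hh => G₁.loopless f (hh ▸ hbf)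
  have haV : a ∈ G₁.verts := (G₁.support _ _ haf).2
  have hbV : b ∈ G₁.verts := (G₁.support _ _ hbf).2
  refine ⟨⟨G₁.verts.erase f,
    fun x y => (G₁.Adj x y ∧ x ≠ f ∧ y ≠ f) ∨ ((x = a ∧ y = b) ∨ (x = b ∧ y = a)),
    fun x y h => by
      rcases h with ⟨h, h1, h2⟩ | hp
      · exact Or.inl ⟨G₁.symm _ _ h, h2, h1⟩
      · exact Or.inr (by tauto),
    fun x h => by
      rcases h with ⟨h, _, _⟩ | ⟨rfl, h2⟩ | ⟨rfl, h2⟩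
      · exact G₁.loopless x h
      · exact hab h2
      · exact hab h2.symm,
    fun x y h => by
      rcases h with ⟨h, h1, h2⟩ | ⟨rfl, rfl⟩ | ⟨rfl, rfl⟩
      · exact ⟨Finset.mem_erase.mpr ⟨h1, (G₁.support _ _ h).1⟩,
          Finset.mem_erase.mpr ⟨h2, (G₁.support _ _ h).2⟩⟩
      · exact ⟨Finset.mem_erase.mpr ⟨hane, haV⟩, Finset.mem_erase.mpr ⟨hbne, hbV⟩⟩
      · exact ⟨Finset.mem_erase.mpr ⟨hbne, hbV⟩, Finset.mem_erase.mpr ⟨hane, haV⟩⟩,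
    fun x => if x = f then wj else if x = a then G₁.weight a + 1
      else if x = b then G₁.weight b + 1 else G₁.weight x⟩,
    ⟨Or.inr (Or.inl ⟨rfl, rfl⟩), Finset.notMem_erase f _,
      (Finset.insert_erase hf).symm, fun x y => ?_, fun x => ?_⟩,
    rfl, fun a' b' => by simp, fun x hx => ?_, by simp⟩
  · show G₁.Adj x y ↔
      (((G₁.Adj x y ∧ x ≠ f ∧ y ≠ f) ∨ ((x = a ∧ y = b) ∨ (x = b ∧ y = a))) ∧
        ¬(x = a ∧ y = b) ∧ ¬(x = b ∧ y = a)) ∨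
      (x = f ∧ (y = a ∨ y = b)) ∨ (y = f ∧ (x = a ∨ x = b))
    constructor
    · intro h
      by_cases hx : x = f
      · subst hx; exact Or.inr (Or.inl ⟨rfl, (hnb y).mp h⟩)
      · by_cases hy : y = f
        · subst hy
          exact Or.inr (Or.inr ⟨rfl, (hnb x).mp (G₁.symm _ _ h)⟩)
        · refine Or.inl ⟨Or.inl ⟨h, hx, hy⟩, ?_, ?_⟩
          · rintro ⟨rfl, rfl⟩; exact hnadj h
          · rintro ⟨rfl, rfl⟩; exact hnadj (G₁.symm _ _ h)
    · rintro (⟨(⟨h, _, _⟩ | hp), hn1, hn2⟩ | ⟨rfl, rfl | rfl⟩ | ⟨rfl, rfl | rfl⟩)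
      · exact h
      · exact absurd hp (by tauto)
      · exact haf
      · exact hbf
      · exact G₁.symm _ _ haf
      · exact G₁.symm _ _ hbf
  · show G₁.weight x = if x = f then -1 else if x = a then _ - 1 else if x = b then _ - 1 else _
    by_cases hx : x = f
    · simp [hx, hwf]
    · rw [if_neg hx]
      by_cases hxa : x = a
      · subst hxa; simp [hane]
      · rw [if_neg hxa]
        by_cases hxb : x = b
        · subst hxb; simp [hbne, Ne.symm hab]
        · simp [hxb, hxa, hx]
  · show (if x = f then wj else if x = a then G₁.weight a + 1
      else if x = b then G₁.weight b + 1 else G₁.weight x) = _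
    rw [if_neg hx]
    by_cases hxa : x = a
    · subst hxa; simp [hab]
    · rw [if_neg hxa, if_neg hxa]
      by_cases hxb : x = b
      · subst hxb; simp
      · simp [hxb]

/-! ### Stage 2: re-doing the blowup of `G₁` on the blown-down graph `G₀` -/

lemma stage2_verts (G G' G₀ G₁ : WGraph) (e f : ℕ) (hef : e ≠ f)
    (hfG : f ∉ G.verts) (hGv : G'.verts = insert f G.verts)
    (hG1v : G'.verts = insert e G₁.verts) (hG0v : G₀.verts = G₁.verts.erase f) :
    G.verts = insert e G₀.verts := by
  have h1 : G.verts = G'.verts.erase f := by rw [hGv, Finset.erase_insert hfG]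
  rw [h1, hG1v, hG0v, Finset.erase_insert_of_ne hef]

lemma stage2_free (G G' G₀ G₁ : WGraph) (e f : ℕ)
    (pair : ℕ → ℕ → Prop) (incr : ℕ → ℤ)
    (hB1 : IsFreeBlowup G₁ G' e)
    (hef : e ≠ f) (hfG : f ∉ G.verts)
    (hGv : G'.verts = insert f G.verts)
    (hGadj : ∀ a b, G.Adj a b ↔ (a ≠ f ∧ b ≠ f ∧ (G'.Adj a b ∨ pair a b)))
    (hGw : ∀ x, x ≠ f → G.weight x = G'.weight x + incr x)
    (hG0v : G₀.verts = G₁.verts.erase f)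
    (hG0adj : ∀ a b, G₀.Adj a b ↔ ((G₁.Adj a b ∧ a ≠ f ∧ b ≠ f) ∨ pair a b))
    (hG0w : ∀ x, x ≠ f → G₀.weight x = G₁.weight x + incr x)
    (hG0wf : G₀.weight f = G.weight f)
    (hpairf : ∀ a b, pair a b → a ≠ f ∧ b ≠ f)
    (hincr_e : incr e = 0) :
    IsFreeBlowup G₀ G e := by
  obtain ⟨heG1, hG1v, hadj1, hw1⟩ := hB1
  refine ⟨by rw [hG0v]; exact fun h => heG1 (Finset.mem_of_mem_erase h),
    stage2_verts G G' G₀ G₁ e f hef hfG hGv hG1v hG0v, fun a b => ?_, fun x => ?_⟩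
  · rw [hGadj a b, hG0adj a b, ← hadj1 a b]
    constructor
    · rintro ⟨h1, h2, h | hp⟩
      · exact Or.inl ⟨h, h1, h2⟩
      · exact Or.inr hp
    · rintro (⟨h, h1, h2⟩ | hp)
      · exact ⟨h1, h2, Or.inl h⟩
      · obtain ⟨h1, h2⟩ := hpairf a b hp
        exact ⟨h1, h2, Or.inr hp⟩
  · by_cases hx : x = e
    · subst hx
      rw [if_pos rfl, hGw x hef, hw1 x, if_pos rfl, hincr_e]; ring
    · rw [if_neg hx]
      by_cases hxf : x = f
      · rw [hxf]; exact hG0wf.symm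
      · rw [hGw x hxf, hG0w x hxf, hw1 x, if_neg hx]

lemma stage2_vertex (G G' G₀ G₁ : WGraph) (e f u' : ℕ)
    (pair : ℕ → ℕ → Prop) (incr : ℕ → ℤ)
    (hB1 : IsVertexBlowup G₁ G' u' e)
    (hef : e ≠ f) (hu'f : u' ≠ f) (hfG : f ∉ G.verts)
    (hGv : G'.verts = insert f G.verts)
    (hGadj : ∀ a b, G.Adj a b ↔ (a ≠ f ∧ b ≠ f ∧ (G'.Adj a b ∨ pair a b)))
    (hGw : ∀ x, x ≠ f → G.weight x = G'.weight x + incr x)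
    (hG0v : G₀.verts = G₁.verts.erase f)
    (hG0adj : ∀ a b, G₀.Adj a b ↔ ((G₁.Adj a b ∧ a ≠ f ∧ b ≠ f) ∨ pair a b))
    (hG0w : ∀ x, x ≠ f → G₀.weight x = G₁.weight x + incr x)
    (hG0wf : G₀.weight f = G.weight f)
    (hpairf : ∀ a b, pair a b → a ≠ f ∧ b ≠ f)
    (hincr_e : incr e = 0) :
    IsVertexBlowup G₀ G u' e := by
  obtain ⟨hu'G1, heG1, hG1v, hadj1, hw1⟩ := hB1
  have heu' : e ≠ u' := fun hh => heG1 (hh ▸ hu'G1)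
  refine ⟨by rw [hG0v]; exact Finset.mem_erase.mpr ⟨hu'f, hu'G1⟩,
    by rw [hG0v]; exact fun h => heG1 (Finset.mem_of_mem_erase h),
    stage2_verts G G' G₀ G₁ e f hef hfG hGv hG1v hG0v, fun a b => ?_, fun x => ?_⟩
  · rw [hGadj a b, hG0adj a b]
    constructor
    · rintro ⟨h1, h2, h | hp⟩
      · rcases (hadj1 a b).mp h with h | ⟨rfl, rfl⟩ | ⟨rfl, rfl⟩
        · exact Or.inl (Or.inl ⟨h, h1, h2⟩)
        · exact Or.inr (Or.inl ⟨rfl, rfl⟩)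
        · exact Or.inr (Or.inr ⟨rfl, rfl⟩)
      · exact Or.inl (Or.inr hp)
    · rintro ((⟨h, h1, h2⟩ | hp) | ⟨rfl, rfl⟩ | ⟨rfl, rfl⟩)
      · exact ⟨h1, h2, Or.inl ((hadj1 a b).mpr (Or.inl h))⟩
      · obtain ⟨h1, h2⟩ := hpairf a b hp
        exact ⟨h1, h2, Or.inr hp⟩
      · exact ⟨hu'f, hef, Or.inl ((hadj1 _ _).mpr (Or.inr (Or.inl ⟨rfl, rfl⟩)))⟩
      · exact ⟨hef, hu'f, Or.inl ((hadj1 _ _).mpr (Or.inr (Or.inr ⟨rfl, rfl⟩)))⟩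
  · by_cases hx : x = e
    · subst hx
      rw [if_pos rfl, hGw x hef, hw1 x, if_pos rfl, hincr_e]; ring
    · rw [if_neg hx]
      by_cases hxf : x = f
      · rw [hxf, if_neg (fun h : f = u' => hu'f h.symm)]
        exact hG0wf.symm
      · by_cases hxu : x = u'
        · rw [if_pos hxu, hGw x hxf, hw1 x, if_neg hx, if_pos hxu, hG0w u' hu'f, hxu]
          ring
        · rw [if_neg hxu, hGw x hxf, hG0w x hxf, hw1 x, if_neg hx, if_neg hxu]

lemma stage2_edge (G G' G₀ G₁ : WGraph) (e f u₁' u₂' : ℕ)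
    (pair : ℕ → ℕ → Prop) (incr : ℕ → ℤ)
    (hB1 : IsEdgeBlowup G₁ G' u₁' u₂' e)
    (hef : e ≠ f) (h1f : u₁' ≠ f) (h2f : u₂' ≠ f) (hfG : f ∉ G.verts)
    (hGv : G'.verts = insert f G.verts)
    (hGadj : ∀ a b, G.Adj a b ↔ (a ≠ f ∧ b ≠ f ∧ (G'.Adj a b ∨ pair a b)))
    (hGw : ∀ x, x ≠ f → G.weight x = G'.weight x + incr x)
    (hG0v : G₀.verts = G₁.verts.erase f)
    (hG0adj : ∀ a b, G₀.Adj a b ↔ ((G₁.Adj a b ∧ a ≠ f ∧ b ≠ f) ∨ pair a b))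
    (hG0w : ∀ x, x ≠ f → G₀.weight x = G₁.weight x + incr x)
    (hG0wf : G₀.weight f = G.weight f)
    (hpairf : ∀ a b, pair a b → a ≠ f ∧ b ≠ f)
    (hpair_notY : ∀ a b, pair a b → ¬(a = u₁' ∧ b = u₂') ∧ ¬(a = u₂' ∧ b = u₁'))
    (hincr_e : incr e = 0) :
    IsEdgeBlowup G₀ G u₁' u₂' e := by
  obtain ⟨hadj12, heG1, hG1v, hadj1, hw1⟩ := hB1
  obtain ⟨h1V, h2V⟩ := G₁.support _ _ hadj12
  have h1e : u₁' ≠ e := fun hh => heG1 (hh ▸ h1V)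
  have h2e : u₂' ≠ e := fun hh => heG1 (hh ▸ h2V)
  refine ⟨(hG0adj _ _).mpr (Or.inl ⟨hadj12, h1f, h2f⟩),
    by rw [hG0v]; exact fun h => heG1 (Finset.mem_of_mem_erase h),
    stage2_verts G G' G₀ G₁ e f hef hfG hGv hG1v hG0v, fun a b => ?_, fun x => ?_⟩
  · rw [hGadj a b, hG0adj a b]
    constructor
    · rintro ⟨h1, h2, h | hp⟩
      · rcases (hadj1 a b).mp h with ⟨h, hn1, hn2⟩ | ⟨rfl, h2'⟩ | ⟨rfl, h2'⟩
        · exact Or.inl ⟨Or.inl ⟨h, h1, h2⟩, hn1, hn2⟩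
        · exact Or.inr (Or.inl ⟨rfl, h2'⟩)
        · exact Or.inr (Or.inr ⟨rfl, h2'⟩)
      · obtain ⟨hn1, hn2⟩ := hpair_notY a b hp
        exact Or.inl ⟨Or.inr hp, hn1, hn2⟩
    · rintro (⟨(⟨h, h1, h2⟩ | hp), hn1, hn2⟩ | ⟨rfl, h2'⟩ | ⟨rfl, h2'⟩)
      · exact ⟨h1, h2, Or.inl ((hadj1 a b).mpr (Or.inl ⟨h, hn1, hn2⟩))⟩
      · obtain ⟨h1, h2⟩ := hpairf a b hp
        exact ⟨h1, h2, Or.inr hp⟩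
      · refine ⟨hef, ?_, Or.inl ((hadj1 _ _).mpr (Or.inr (Or.inl ⟨rfl, h2'⟩)))⟩
        rcases h2' with rfl | rfl
        · exact h1f
        · exact h2f
      · refine ⟨?_, hef, Or.inl ((hadj1 _ _).mpr (Or.inr (Or.inr ⟨rfl, h2'⟩)))⟩
        rcases h2' with rfl | rfl
        · exact h1f
        · exact h2f
  · by_cases hx : x = e
    · subst hx
      rw [if_pos rfl, hGw x hef, hw1 x, if_pos rfl, hincr_e]; ring
    · rw [if_neg hx]
      by_cases hxf : x = f
      · rw [hxf, if_neg (fun h : f = u₁' => h1f h.symm),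
          if_neg (fun h : f = u₂' => h2f h.symm)]
        exact hG0wf.symm
      · by_cases hx1 : x = u₁'
        · rw [if_pos hx1, hGw x hxf, hw1 x, if_neg hx, if_pos hx1, hG0w u₁' h1f, hx1]
          ring
        · rw [if_neg hx1]
          by_cases hx2 : x = u₂'
          · rw [if_pos hx2, hGw x hxf, hw1 x, if_neg hx, if_neg hx1, if_pos hx2,
              hG0w u₂' h2f, hx2]
            ring
          · rw [if_neg hx2, hGw x hxf, hG0w x hxf, hw1 x, if_neg hx, if_neg hx1, if_neg hx2]

/-! ### The case of equal created vertices -/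

lemma weqv_same (G G₁ G' : WGraph) (f : ℕ) (pair : ℕ → ℕ → Prop) (incr : ℕ → ℤ)
    (hGv : G'.verts = insert f G.verts) (hG1v : G'.verts = insert f G₁.verts)
    (hfG : f ∉ G.verts) (hfG1 : f ∉ G₁.verts)
    (hGadj : ∀ a b, G.Adj a b ↔ (a ≠ f ∧ b ≠ f ∧ (G'.Adj a b ∨ pair a b)))
    (hG1adj : ∀ a b, G₁.Adj a b ↔ (a ≠ f ∧ b ≠ f ∧ (G'.Adj a b ∨ pair a b)))
    (hGw : ∀ x, x ≠ f → G.weight x = G'.weight x + incr x)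
    (hG1w : ∀ x, x ≠ f → G₁.weight x = G'.weight x + incr x) : WEqv G₁ G := by
  have hv : G₁.verts = G.verts := by
    have h1 : G₁.verts = G'.verts.erase f := by rw [hG1v, Finset.erase_insert hfG1]
    have h2 : G.verts = G'.verts.erase f := by rw [hGv, Finset.erase_insert hfG]
    rw [h1, h2]
  refine ⟨hv, fun a b => by rw [hGadj a b, hG1adj a b], fun x hx => ?_⟩
  have hxf : x ≠ f := fun hh => hfG (hh ▸ hx)
  rw [hGw x hxf, hG1w x hxf]

/-! ### The exceptional edge–edge case -/

lemma exceptional_case (G G₁ G' : WGraph) (e f a b : ℕ)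
    (hB : IsEdgeBlowup G G' a b f)
    (hB1 : IsEdgeBlowup G₁ G' a b e)
    (hef : e ≠ f)
    (hC1 : Constructible G₁) : Constructible G := by
  have hGadj := edgeBlowup_inv_adj G G' a b f hB
  have hGw := edgeBlowup_inv_w G G' a b f hB
  obtain ⟨hab', hfG, hGv, haG, hwG⟩ := hB
  obtain ⟨hadj12, heG1, hG1v, hadj1, hw1⟩ := hB1
  have hab : a ≠ b := fun hh => G.loopless a (hh ▸ hab')
  have haGv : a ∈ G.verts := (G.support _ _ hab').1
  have hbGv : b ∈ G.verts := (G.support _ _ hab').2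
  have haV1 : a ∈ G₁.verts := (G₁.support _ _ hadj12).1
  have hbV1 : b ∈ G₁.verts := (G₁.support _ _ hadj12).2
  have haf : a ≠ f := fun hh => hfG (hh ▸ haGv)
  have hbf : b ≠ f := fun hh => hfG (hh ▸ hbGv)
  have hae : a ≠ e := fun hh => heG1 (hh ▸ haV1)
  have hbe : b ≠ e := fun hh => heG1 (hh ▸ hbV1)
  have hfV1 : f ∈ G₁.verts := by
    have : f ∈ G'.verts := by rw [hGv]; exact Finset.mem_insert_self f _
    rw [hG1v] at this
    rcases Finset.mem_insert.mp this with h | h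
    · exact absurd h.symm hef
    · exact h
  have hGverts : G.verts = insert e (G₁.verts.erase f) := by
    have h1 : G.verts = G'.verts.erase f := by rw [hGv, Finset.erase_insert hfG]
    rw [h1, hG1v, Finset.erase_insert_of_ne hef]
  -- f's weight in G₁ is -1
  have hwf' : G'.weight f = -1 := by rw [hwG f, if_pos rfl]
  have hwfG1 : G₁.weight f = -1 := by
    have := hw1 f
    rw [if_neg (fun h : f = e => hef h.symm), if_neg (fun h : f = a => haf (h.symm ▸ rfl)),
      if_neg (fun h : f = b => hbf (h.symm ▸ rfl))] at this
    · rw [← this, hwf']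
  -- f's neighbours in G₁ are exactly a, b
  have hfnbG' : ∀ x, G'.Adj f x ↔ (x = a ∨ x = b) :=
    edgeBlowup_e_adj G G' a b f ⟨hab', hfG, hGv, haG, hwG⟩
  have hfnb : ∀ x, G₁.Adj f x ↔ (x = a ∨ x = b) := by
    intro x
    rw [← hfnbG' x, hadj1 f x]
    constructor
    · intro h
      exact Or.inl ⟨h, fun hh => haf hh.1.symm, fun hh => hbf hh.1.symm⟩
    · rintro (⟨h, _, _⟩ | ⟨h1, _⟩ | ⟨_, h1 | h1⟩)
      · exact h
      · exact absurd h1.symm hef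
      · exact absurd h1.symm haf
      · exact absurd h1.symm hbf
  -- the renamed graph
  set σ : Equiv.Perm ℕ := Equiv.swap f e with hσ
  have hsymm : ∀ x, σ.symm x = Equiv.swap f e x := by
    intro x; rw [hσ]; simp
  have hC2 : Constructible (ren σ G₁) := constructible_ren σ G₁ hC1
  refine constructible_of_weqv _ _ hC2 ⟨?_, ?_, ?_⟩
  · -- verts
    apply Finset.ext
    intro x
    rw [mem_ren_verts, hsymm x, hGverts]
    by_cases hx : x = e
    · subst hx
      simp [Equiv.swap_apply_right, hfV1]
    · by_cases hxf : x = f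
      · subst hxf
        simp [Equiv.swap_apply_left, heG1, hef, Ne.symm hef]
      · rw [Equiv.swap_apply_of_ne_of_ne hxf hx]
        simp [hx, hxf]
  · -- adjacency
    intro x y
    show G₁.Adj (σ.symm x) (σ.symm y) ↔ G.Adj x y
    rw [hsymm x, hsymm y, hGadj x y]
    have hnoe : ∀ z, ¬ G₁.Adj z e := fun z h => heG1 (G₁.support _ _ h).2
    have hnoe' : ∀ z, ¬ G₁.Adj e z := fun z h => heG1 (G₁.support _ _ h).1
    have hpair_adj : ∀ p q : ℕ, ((p = a ∧ q = b) ∨ (p = b ∧ q = a)) → G₁.Adj p q := by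
      rintro p q (⟨rfl, rfl⟩ | ⟨rfl, rfl⟩)
      · exact hadj12
      · exact G₁.symm _ _ hadj12
    by_cases hx : x = e <;> by_cases hy : y = e
    · rw [hx, hy, Equiv.swap_apply_right]
      constructor
      · intro h; exact absurd h (G₁.loopless f)
      · rintro ⟨-, -, h | hp⟩
        · exact absurd h (G'.loopless e)
        · rcases hp with ⟨h1, -⟩ | ⟨h1, -⟩
          · exact absurd h1.symm hae
          · exact absurd h1.symm hbe
    · by_cases hyf : y = f
      · rw [hx, hyf, Equiv.swap_apply_right, Equiv.swap_apply_left]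
        constructor
        · intro h; exact absurd h (hnoe f)
        · rintro ⟨-, h2, -⟩; exact absurd rfl h2
      · rw [hx, Equiv.swap_apply_right, Equiv.swap_apply_of_ne_of_ne hyf hy]
        constructor
        · intro h
          exact ⟨hef, hyf, Or.inl ((hadj1 e y).mpr (Or.inr (Or.inl ⟨rfl, (hfnb y).mp h⟩)))⟩
        · rintro ⟨-, -, h | hp⟩
          · rcases (hadj1 e y).mp h with ⟨hadj, -, -⟩ | ⟨-, h'⟩ | ⟨h', -⟩
            · exact absurd hadj (hnoe' y)
            · exact (hfnb y).mpr h'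
            · exact absurd h' hy
          · rcases hp with ⟨h1, -⟩ | ⟨h1, -⟩
            · exact absurd h1.symm hae
            · exact absurd h1.symm hbe
    · by_cases hxf : x = f
      · rw [hy, hxf, Equiv.swap_apply_right, Equiv.swap_apply_left]
        constructor
        · intro h; exact absurd h (hnoe' f)
        · rintro ⟨h1, -, -⟩; exact absurd rfl h1
      · rw [hy, Equiv.swap_apply_right, Equiv.swap_apply_of_ne_of_ne hxf hx]
        constructor
        · intro h
          exact ⟨hxf, hef, Or.inl ((hadj1 x e).mpr (Or.inr (Or.inr
              ⟨rfl, (hfnb x).mp (G₁.symm _ _ h)⟩)))⟩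
        · rintro ⟨-, -, h | hp⟩
          · rcases (hadj1 x e).mp h with ⟨hadj, -, -⟩ | ⟨h', -⟩ | ⟨-, h'⟩
            · exact absurd hadj (hnoe x)
            · exact absurd h' hx
            · exact G₁.symm _ _ ((hfnb x).mpr h')
          · rcases hp with ⟨-, h1⟩ | ⟨-, h1⟩
            · exact absurd h1.symm hbe
            · exact absurd h1.symm hae
    · by_cases hxf : x = f <;> by_cases hyf : y = f
      · rw [hxf, hyf, Equiv.swap_apply_left]
        constructor
        · intro h; exact absurd h (G₁.loopless e)
        · rintro ⟨h1, -, -⟩; exact absurd rfl h1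
      · rw [hxf, Equiv.swap_apply_left, Equiv.swap_apply_of_ne_of_ne hyf hy]
        constructor
        · intro h; exact absurd h (hnoe' y)
        · rintro ⟨h1, -, -⟩; exact absurd rfl h1
      · rw [hyf, Equiv.swap_apply_left, Equiv.swap_apply_of_ne_of_ne hxf hx]
        constructor
        · intro h; exact absurd h (hnoe x)
        · rintro ⟨-, h2, -⟩; exact absurd rfl h2
      · rw [Equiv.swap_apply_of_ne_of_ne hxf hx, Equiv.swap_apply_of_ne_of_ne hyf hy]
        constructor
        · intro h
          refine ⟨hxf, hyf, ?_⟩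
          by_cases hp : (x = a ∧ y = b) ∨ (x = b ∧ y = a)
          · exact Or.inr hp
          · push_neg at hp
            exact Or.inl ((hadj1 x y).mpr (Or.inl ⟨h,
                fun hh => (hp.1 hh.1) hh.2, fun hh => (hp.2 hh.1) hh.2⟩))
        · rintro ⟨-, -, h | hp⟩
          · rcases (hadj1 x y).mp h with ⟨h, -, -⟩ | ⟨h', -⟩ | ⟨h', -⟩
            · exact h
            · exact absurd h' hx
            · exact absurd h' hy
          · exact hpair_adj x y hp
  · -- weights
    intro x hx
    show G₁.weight (σ.symm x) = G.weight x
    rw [hsymm x]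
    rw [hGverts] at hx
    by_cases hxe : x = e
    · rw [hxe, Equiv.swap_apply_right, hwfG1, hGw e hef, hw1 e, if_pos rfl,
        if_neg hae.symm, if_neg hbe.symm]
      ring
    · have hxf : x ≠ f := by
        rcases Finset.mem_insert.mp hx with h | h
        · exact absurd h hxe
        · exact (Finset.mem_erase.mp h).1
      rw [Equiv.swap_apply_of_ne_of_ne hxf hxe, hGw x hxf, hw1 x, if_neg hxe]
      by_cases hxa : x = a
      · rw [if_pos hxa, if_pos hxa, hxa]; ring
      · rw [if_neg hxa, if_neg hxa]
        by_cases hxb : x = b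
        · rw [if_pos hxb, if_pos hxb, hxb]; ring
        · rw [if_neg hxb, if_neg hxb]; ring

/-! ### Helper facts for the main step -/

lemma f_mem_G1 (G G₁ G' : WGraph) (e f : ℕ)
    (hG1v : G'.verts = insert e G₁.verts) (hGv : G'.verts = insert f G.verts)
    (hef : e ≠ f) : f ∈ G₁.verts := by
  have : f ∈ G'.verts := by rw [hGv]; exact Finset.mem_insert_self f _
  rw [hG1v] at this
  rcases Finset.mem_insert.mp this with h | h
  · exact absurd h.symm hef
  · exact h

lemma wG1_f (G₁ : WGraph) (f : ℕ) (hW1 : ∀ x ∈ G₁.verts, G₁.weight x ≤ -1)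
    (hfV : f ∈ G₁.verts) : G₁.weight f ≤ -1 := hW1 f hfV

/-! ### The master step: constructibility is closed under blowing down -/

lemma blowdown_step (G G₁ G' : WGraph)
    (hC1 : Constructible G₁)
    (hIH : ∀ K, IsBlowup K G₁ → Constructible K)
    (hW1 : ∀ x ∈ G₁.verts, G₁.weight x ≤ -1)
    (hB1 : IsBlowup G₁ G') (hB : IsBlowup G G') : Constructible G := by
  rcases hB with hBF | hBV | hBE
  · -- X = F : G' is a free blowup of G at f
    obtain ⟨f, hBF⟩ := hBF
    have hGadj := freeBlowup_inv_adj G G' f hBF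
    have hGw := freeBlowup_inv_w G G' f hBF
    have hfnbG' := freeBlowup_e_adj G G' f hBF
    obtain ⟨hfG, hGv, hGa, hGwraw⟩ := hBF
    have hfw' : G'.weight f = -1 := by rw [hGwraw f, if_pos rfl]
    rcases hB1 with ⟨e, heG1, hG1v, ha1, hw1⟩ | ⟨u', e, hu', heG1, hG1v, ha1, hw1⟩ |
      ⟨u₁', u₂', e, hadj12', heG1, hG1v, ha1, hw1⟩
    · -- Y = F
      by_cases hef : e = f
      · subst hef
        have hG1adj := freeBlowup_inv_adj G₁ G' e ⟨heG1, hG1v, ha1, hw1⟩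
        have hG1w := freeBlowup_inv_w G₁ G' e ⟨heG1, hG1v, ha1, hw1⟩
        exact constructible_of_weqv G₁ G hC1
          (weqv_same G G₁ G' e (fun _ _ => False) (fun _ => 0)
            hGv hG1v hfG heG1 hGadj hG1adj hGw hG1w)
      · have hfV1 : f ∈ G₁.verts := f_mem_G1 G G₁ G' e f hG1v hGv hef
        have hfadj1 : ∀ x, G₁.Adj f x ↔ G'.Adj f x := fun x => (ha1 f x).symm
        have hfnb1 : ∀ x, ¬ G₁.Adj f x := fun x h => hfnbG' x ((hfadj1 x).mp h)
        have hwfG1 : G₁.weight f = -1 := by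
          have h := hw1 f
          rw [if_neg (fun hh : f = e => hef hh.symm)] at h
          rw [← h, hfw']
        obtain ⟨G₀, hb0, hG0v, hG0adj, hG0w, hG0wf⟩ :=
          stage1_free G₁ f (G.weight f) hfV1 hwfG1 hfnb1
        have hC0 := hIH G₀ (Or.inl ⟨f, hb0⟩)
        refine constructible_extend G₀ G hC0 (Or.inl ⟨e, ?_⟩)
        exact stage2_free G G' G₀ G₁ e f (fun _ _ => False) (fun _ => 0)
          ⟨heG1, hG1v, ha1, hw1⟩ hef hfG hGv hGadj hGw hG0v hG0adj hG0w hG0wf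
          (fun a b h => h.elim) rfl
    · -- Y = V
      by_cases hef : e = f
      · subst hef
        exact absurd ((ha1 e u').mpr (Or.inr (Or.inr ⟨rfl, rfl⟩))) (hfnbG' u')
      · have hfV1 : f ∈ G₁.verts := f_mem_G1 G G₁ G' e f hG1v hGv hef
        have hu'e : u' ≠ e := fun hh => heG1 (hh ▸ hu')
        have hfu' : f ≠ u' := by
          intro h
          have hh := hw1 f
          rw [if_neg (fun hh2 : f = e => hef hh2.symm), if_pos h, hfw'] at hh
          have := hW1 u' hu'
          rw [h] at *
          omega
        have hfadj1 : ∀ x, G₁.Adj f x ↔ G'.Adj f x := by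
          intro x
          rw [ha1 f x]
          constructor
          · exact fun h => Or.inl h
          · rintro (h | ⟨h1, _⟩ | ⟨h1, _⟩)
            · exact h
            · exact absurd h1 hfu'
            · exact absurd h1.symm hef
        have hfnb1 : ∀ x, ¬ G₁.Adj f x := fun x h => hfnbG' x ((hfadj1 x).mp h)
        have hwfG1 : G₁.weight f = -1 := by
          have h := hw1 f
          rw [if_neg (fun hh : f = e => hef hh.symm), if_neg hfu'] at h
          rw [← h, hfw']
        obtain ⟨G₀, hb0, hG0v, hG0adj, hG0w, hG0wf⟩ :=
          stage1_free G₁ f (G.weight f) hfV1 hwfG1 hfnb1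
        have hC0 := hIH G₀ (Or.inl ⟨f, hb0⟩)
        refine constructible_extend G₀ G hC0 (Or.inr (Or.inl ⟨u', e, ?_⟩))
        exact stage2_vertex G G' G₀ G₁ e f u' (fun _ _ => False) (fun _ => 0)
          ⟨hu', heG1, hG1v, ha1, hw1⟩ hef (fun h => hfu' h.symm) hfG hGv hGadj hGw
          hG0v hG0adj hG0w hG0wf (fun a b h => h.elim) rfl
    · -- Y = E
      by_cases hef : e = f
      · subst hef
        exact absurd ((ha1 e u₁').mpr (Or.inr (Or.inl ⟨rfl, Or.inl rfl⟩))) (hfnbG' u₁')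
      · have hfV1 : f ∈ G₁.verts := f_mem_G1 G G₁ G' e f hG1v hGv hef
        obtain ⟨h1V, h2V⟩ := G₁.support _ _ hadj12'
        have hfu1 : f ≠ u₁' := by
          intro h
          have hh := hw1 f
          rw [if_neg (fun hh2 : f = e => hef hh2.symm), if_pos h, hfw'] at hh
          have := hW1 u₁' h1V
          rw [h] at *
          omega
        have hfu2 : f ≠ u₂' := by
          intro h
          have hh := hw1 f
          rw [if_neg (fun hh2 : f = e => hef hh2.symm),
            if_neg (fun hh2 : f = u₁' => hfu1 hh2), if_pos h, hfw'] at hh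
          have := hW1 u₂' h2V
          rw [h] at *
          omega
        have hfadj1 : ∀ x, G₁.Adj f x ↔ G'.Adj f x := by
          intro x
          rw [ha1 f x]
          constructor
          · intro h
            exact Or.inl ⟨h, fun hh => hfu1 hh.1, fun hh => hfu2 hh.1⟩
          · rintro (⟨h, _, _⟩ | ⟨h1, _⟩ | ⟨_, h1 | h1⟩)
            · exact h
            · exact absurd h1.symm hef
            · exact absurd h1 hfu1
            · exact absurd h1 hfu2
        have hfnb1 : ∀ x, ¬ G₁.Adj f x := fun x h => hfnbG' x ((hfadj1 x).mp h)
        have hwfG1 : G₁.weight f = -1 := by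
          have h := hw1 f
          rw [if_neg (fun hh : f = e => hef hh.symm), if_neg hfu1, if_neg hfu2] at h
          rw [← h, hfw']
        obtain ⟨G₀, hb0, hG0v, hG0adj, hG0w, hG0wf⟩ :=
          stage1_free G₁ f (G.weight f) hfV1 hwfG1 hfnb1
        have hC0 := hIH G₀ (Or.inl ⟨f, hb0⟩)
        refine constructible_extend G₀ G hC0 (Or.inr (Or.inr ⟨u₁', u₂', e, ?_⟩))
        exact stage2_edge G G' G₀ G₁ e f u₁' u₂' (fun _ _ => False) (fun _ => 0)
          ⟨hadj12', heG1, hG1v, ha1, hw1⟩ hef (fun h => hfu1 h.symm) (fun h => hfu2 h.symm)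
          hfG hGv hGadj hGw hG0v hG0adj hG0w hG0wf (fun a b h => h.elim)
          (fun a b h => h.elim) rfl
  · -- X = V : G' is a vertex blowup of G at A, created f
    obtain ⟨A, f, hBV⟩ := hBV
    have hGadj := vertexBlowup_inv_adj G G' A f hBV
    have hGw := vertexBlowup_inv_w G G' A f hBV
    have hfnbG' := vertexBlowup_e_adj G G' A f hBV
    obtain ⟨hAG, hfG, hGv, hGa, hGwraw⟩ := hBV
    have hfw' : G'.weight f = -1 := by rw [hGwraw f, if_pos rfl]
    have hAf : A ≠ f := fun hh => hfG (hh ▸ hAG)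
    rcases hB1 with ⟨e, heG1, hG1v, ha1, hw1⟩ | ⟨u', e, hu', heG1, hG1v, ha1, hw1⟩ |
      ⟨u₁', u₂', e, hadj12', heG1, hG1v, ha1, hw1⟩
    · -- Y = F : contradiction with f having a neighbour
      by_cases hef : e = f
      · subst hef
        have : G'.Adj e A := (hfnbG' A).mpr rfl
        exact absurd ((ha1 e A).mp this) (not_adj_left G₁ e A heG1)
      · -- main path
        have hfV1 : f ∈ G₁.verts := f_mem_G1 G G₁ G' e f hG1v hGv hef
        have hfadj1 : ∀ x, G₁.Adj f x ↔ G'.Adj f x := fun x => (ha1 f x).symm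
        have hnb1 : ∀ x, G₁.Adj f x ↔ x = A := fun x => (hfadj1 x).trans (hfnbG' x)
        have hAe : A ≠ e := by
          intro h
          have : G₁.Adj f A := (hnb1 A).mpr rfl
          exact heG1 (h ▸ (G₁.support _ _ this).2)
        have hwfG1 : G₁.weight f = -1 := by
          have h := hw1 f
          rw [if_neg (fun hh : f = e => hef hh.symm)] at h
          rw [← h, hfw']
        obtain ⟨G₀, hb0, hG0v, hG0adj, hG0w, hG0wf⟩ :=
          stage1_vertex G₁ f A (G.weight f) hfV1 hwfG1 hnb1
        have hC0 := hIH G₀ (Or.inr (Or.inl ⟨A, f, hb0⟩))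
        refine constructible_extend G₀ G hC0 (Or.inl ⟨e, ?_⟩)
        exact stage2_free G G' G₀ G₁ e f (fun _ _ => False)
          (fun x => if x = A then 1 else 0)
          ⟨heG1, hG1v, ha1, hw1⟩ hef hfG hGv hGadj hGw hG0v hG0adj hG0w hG0wf
          (fun a b h => h.elim) (by simp [hAe.symm])
    · -- Y = V
      by_cases hef : e = f
      · subst hef
        -- bases must coincide
        have hu'A : u' = A := by
          have h : G'.Adj e u' := (ha1 e u').mpr (Or.inr (Or.inr ⟨rfl, rfl⟩))
          exact (hfnbG' u').mp h
        have hB1' : IsVertexBlowup G₁ G' A e :=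
          hu'A ▸ (⟨hu', heG1, hG1v, ha1, hw1⟩ : IsVertexBlowup G₁ G' u' e)
        have hG1adj := vertexBlowup_inv_adj G₁ G' A e hB1'
        have hG1w := vertexBlowup_inv_w G₁ G' A e hB1'
        exact constructible_of_weqv G₁ G hC1
          (weqv_same G G₁ G' e (fun _ _ => False) (fun x => if x = A then 1 else 0)
            hGv hG1v hfG heG1 hGadj hG1adj hGw hG1w)
      · have hfV1 : f ∈ G₁.verts := f_mem_G1 G G₁ G' e f hG1v hGv hef
        have hu'e : u' ≠ e := fun hh => heG1 (hh ▸ hu')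
        have hfu' : f ≠ u' := by
          intro h
          have hh := hw1 f
          rw [if_neg (fun hh2 : f = e => hef hh2.symm), if_pos h, hfw'] at hh
          have := hW1 u' hu'
          rw [h] at *
          omega
        have hfadj1 : ∀ x, G₁.Adj f x ↔ G'.Adj f x := by
          intro x
          rw [ha1 f x]
          constructor
          · exact fun h => Or.inl h
          · rintro (h | ⟨h1, _⟩ | ⟨h1, _⟩)
            · exact h
            · exact absurd h1 hfu'
            · exact absurd h1.symm hef
        have hnb1 : ∀ x, G₁.Adj f x ↔ x = A := fun x => (hfadj1 x).trans (hfnbG' x)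
        have hAe : A ≠ e := by
          intro h
          have : G₁.Adj f A := (hnb1 A).mpr rfl
          exact heG1 (h ▸ (G₁.support _ _ this).2)
        have hwfG1 : G₁.weight f = -1 := by
          have h := hw1 f
          rw [if_neg (fun hh : f = e => hef hh.symm), if_neg hfu'] at h
          rw [← h, hfw']
        obtain ⟨G₀, hb0, hG0v, hG0adj, hG0w, hG0wf⟩ :=
          stage1_vertex G₁ f A (G.weight f) hfV1 hwfG1 hnb1
        have hC0 := hIH G₀ (Or.inr (Or.inl ⟨A, f, hb0⟩))
        refine constructible_extend G₀ G hC0 (Or.inr (Or.inl ⟨u', e, ?_⟩))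
        exact stage2_vertex G G' G₀ G₁ e f u' (fun _ _ => False)
          (fun x => if x = A then 1 else 0)
          ⟨hu', heG1, hG1v, ha1, hw1⟩ hef (fun h => hfu' h.symm) hfG hGv hGadj hGw
          hG0v hG0adj hG0w hG0wf (fun a b h => h.elim) (by simp [hAe.symm])
    · -- Y = E : with X = V, equal created vertex is impossible
      by_cases hef : e = f
      · subst hef
        have h1 : G'.Adj e u₁' := (ha1 e u₁').mpr (Or.inr (Or.inl ⟨rfl, Or.inl rfl⟩))
        have h2 : G'.Adj e u₂' := (ha1 e u₂').mpr (Or.inr (Or.inl ⟨rfl, Or.inr rfl⟩))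
        have h12 : u₁' ≠ u₂' := fun hh => G₁.loopless u₁' (hh ▸ hadj12')
        have e1 := (hfnbG' u₁').mp h1
        have e2 := (hfnbG' u₂').mp h2
        exact absurd (e1.trans e2.symm) h12
      · have hfV1 : f ∈ G₁.verts := f_mem_G1 G G₁ G' e f hG1v hGv hef
        obtain ⟨h1V, h2V⟩ := G₁.support _ _ hadj12'
        have hfu1 : f ≠ u₁' := by
          intro h
          have hh := hw1 f
          rw [if_neg (fun hh2 : f = e => hef hh2.symm), if_pos h, hfw'] at hh
          have := hW1 u₁' h1V
          rw [h] at *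
          omega
        have hfu2 : f ≠ u₂' := by
          intro h
          have hh := hw1 f
          rw [if_neg (fun hh2 : f = e => hef hh2.symm),
            if_neg (fun hh2 : f = u₁' => hfu1 hh2), if_pos h, hfw'] at hh
          have := hW1 u₂' h2V
          rw [h] at *
          omega
        have hfadj1 : ∀ x, G₁.Adj f x ↔ G'.Adj f x := by
          intro x
          rw [ha1 f x]
          constructor
          · intro h
            exact Or.inl ⟨h, fun hh => hfu1 hh.1, fun hh => hfu2 hh.1⟩
          · rintro (⟨h, _, _⟩ | ⟨h1, _⟩ | ⟨_, h1 | h1⟩)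
            · exact h
            · exact absurd h1.symm hef
            · exact absurd h1 hfu1
            · exact absurd h1 hfu2
        have hnb1 : ∀ x, G₁.Adj f x ↔ x = A := fun x => (hfadj1 x).trans (hfnbG' x)
        have hAe : A ≠ e := by
          intro h
          have : G₁.Adj f A := (hnb1 A).mpr rfl
          exact heG1 (h ▸ (G₁.support _ _ this).2)
        have hwfG1 : G₁.weight f = -1 := by
          have h := hw1 f
          rw [if_neg (fun hh : f = e => hef hh.symm), if_neg hfu1, if_neg hfu2] at h
          rw [← h, hfw']
        obtain ⟨G₀, hb0, hG0v, hG0adj, hG0w, hG0wf⟩ :=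
          stage1_vertex G₁ f A (G.weight f) hfV1 hwfG1 hnb1
        have hC0 := hIH G₀ (Or.inr (Or.inl ⟨A, f, hb0⟩))
        refine constructible_extend G₀ G hC0 (Or.inr (Or.inr ⟨u₁', u₂', e, ?_⟩))
        exact stage2_edge G G' G₀ G₁ e f u₁' u₂' (fun _ _ => False)
          (fun x => if x = A then 1 else 0)
          ⟨hadj12', heG1, hG1v, ha1, hw1⟩ hef (fun h => hfu1 h.symm) (fun h => hfu2 h.symm)
          hfG hGv hGadj hGw hG0v hG0adj hG0w hG0wf (fun a b h => h.elim)
          (fun a b h => h.elim) (by simp [hAe.symm])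
  · -- X = E : G' is an edge blowup of G at (A, B), created f
    obtain ⟨A, B, f, hBE⟩ := hBE
    have hGadj := edgeBlowup_inv_adj G G' A B f hBE
    have hGw := edgeBlowup_inv_w G G' A B f hBE
    have hfnbG' := edgeBlowup_e_adj G G' A B f hBE
    obtain ⟨hABG, hfG, hGv, hGa, hGwraw⟩ := hBE
    have hfw' : G'.weight f = -1 := by rw [hGwraw f, if_pos rfl]
    have hAB : A ≠ B := fun hh => G.loopless A (hh ▸ hABG)
    have hAGv : A ∈ G.verts := (G.support _ _ hABG).1
    have hBGv : B ∈ G.verts := (G.support _ _ hABG).2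
    have hAf : A ≠ f := fun hh => hfG (hh ▸ hAGv)
    have hBf : B ≠ f := fun hh => hfG (hh ▸ hBGv)
    have hnGAB : ¬ G'.Adj A B := by
      intro h
      rcases (hGa A B).mp h with ⟨_, h1, _⟩ | ⟨h1, _⟩ | ⟨h1, _⟩
      · exact h1 ⟨rfl, rfl⟩
      · exact hAf h1
      · exact hBf h1
    rcases hB1 with ⟨e, heG1, hG1v, ha1, hw1⟩ | ⟨u', e, hu', heG1, hG1v, ha1, hw1⟩ |
      ⟨u₁', u₂', e, hadj12', heG1, hG1v, ha1, hw1⟩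
    · -- Y = F : contradiction when e = f
      by_cases hef : e = f
      · subst hef
        have : G'.Adj e A := (hfnbG' A).mpr (Or.inl rfl)
        exact absurd ((ha1 e A).mp this) (not_adj_left G₁ e A heG1)
      · have hfV1 : f ∈ G₁.verts := f_mem_G1 G G₁ G' e f hG1v hGv hef
        have hfadj1 : ∀ x, G₁.Adj f x ↔ G'.Adj f x := fun x => (ha1 f x).symm
        have hnb1 : ∀ x, G₁.Adj f x ↔ (x = A ∨ x = B) := fun x =>
          (hfadj1 x).trans (hfnbG' x)
        have hAe : A ≠ e := by
          intro h
          have : G₁.Adj f A := (hnb1 A).mpr (Or.inl rfl)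
          exact heG1 (h ▸ (G₁.support _ _ this).2)
        have hBe : B ≠ e := by
          intro h
          have : G₁.Adj f B := (hnb1 B).mpr (Or.inr rfl)
          exact heG1 (h ▸ (G₁.support _ _ this).2)
        have hnAB1 : ¬ G₁.Adj A B := fun h => hnGAB ((ha1 A B).mpr h)
        have hwfG1 : G₁.weight f = -1 := by
          have h := hw1 f
          rw [if_neg (fun hh : f = e => hef hh.symm)] at h
          rw [← h, hfw']
        obtain ⟨G₀, hb0, hG0v, hG0adj, hG0w, hG0wf⟩ :=
          stage1_edge G₁ f A B (G.weight f) hfV1 hwfG1 hnb1 hAB hnAB1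
        have hC0 := hIH G₀ (Or.inr (Or.inr ⟨A, B, f, hb0⟩))
        refine constructible_extend G₀ G hC0 (Or.inl ⟨e, ?_⟩)
        exact stage2_free G G' G₀ G₁ e f
          (fun x y => (x = A ∧ y = B) ∨ (x = B ∧ y = A))
          (fun x => if x = A then 1 else if x = B then 1 else 0)
          ⟨heG1, hG1v, ha1, hw1⟩ hef hfG hGv hGadj hGw hG0v hG0adj hG0w hG0wf
          (fun a b h => by rcases h with ⟨rfl, rfl⟩ | ⟨rfl, rfl⟩ <;> exact ⟨by assumption, by assumption⟩)
          (by simp [hAe.symm, hBe.symm])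
    · -- Y = V : contradiction when e = f
      by_cases hef : e = f
      · subst hef
        have h1 : G'.Adj e A := (hfnbG' A).mpr (Or.inl rfl)
        have h2 : G'.Adj e B := (hfnbG' B).mpr (Or.inr rfl)
        have e1 : A = u' := by
          rcases (ha1 e A).mp h1 with h | ⟨h', _⟩ | ⟨_, h'⟩
          · exact absurd h (not_adj_left G₁ e A heG1)
          · exact absurd h' (fun hh => heG1 (hh ▸ hu'))
          · exact h'
        have e2 : B = u' := by
          rcases (ha1 e B).mp h2 with h | ⟨h', _⟩ | ⟨_, h'⟩
          · exact absurd h (not_adj_left G₁ e B heG1)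
          · exact absurd h' (fun hh => heG1 (hh ▸ hu'))
          · exact h'
        exact absurd (e1.trans e2.symm) hAB
      · have hfV1 : f ∈ G₁.verts := f_mem_G1 G G₁ G' e f hG1v hGv hef
        have hu'e : u' ≠ e := fun hh => heG1 (hh ▸ hu')
        have hfu' : f ≠ u' := by
          intro h
          have hh := hw1 f
          rw [if_neg (fun hh2 : f = e => hef hh2.symm), if_pos h, hfw'] at hh
          have := hW1 u' hu'
          rw [h] at *
          omega
        have hfadj1 : ∀ x, G₁.Adj f x ↔ G'.Adj f x := by
          intro x
          rw [ha1 f x]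
          constructor
          · exact fun h => Or.inl h
          · rintro (h | ⟨h1, _⟩ | ⟨h1, _⟩)
            · exact h
            · exact absurd h1 hfu'
            · exact absurd h1.symm hef
        have hnb1 : ∀ x, G₁.Adj f x ↔ (x = A ∨ x = B) := fun x =>
          (hfadj1 x).trans (hfnbG' x)
        have hAe : A ≠ e := by
          intro h
          have : G₁.Adj f A := (hnb1 A).mpr (Or.inl rfl)
          exact heG1 (h ▸ (G₁.support _ _ this).2)
        have hBe : B ≠ e := by
          intro h
          have : G₁.Adj f B := (hnb1 B).mpr (Or.inr rfl)
          exact heG1 (h ▸ (G₁.support _ _ this).2)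
        have hnAB1 : ¬ G₁.Adj A B := by
          intro h
          exact hnGAB ((ha1 A B).mpr (Or.inl h))
        have hwfG1 : G₁.weight f = -1 := by
          have h := hw1 f
          rw [if_neg (fun hh : f = e => hef hh.symm), if_neg hfu'] at h
          rw [← h, hfw']
        obtain ⟨G₀, hb0, hG0v, hG0adj, hG0w, hG0wf⟩ :=
          stage1_edge G₁ f A B (G.weight f) hfV1 hwfG1 hnb1 hAB hnAB1
        have hC0 := hIH G₀ (Or.inr (Or.inr ⟨A, B, f, hb0⟩))
        refine constructible_extend G₀ G hC0 (Or.inr (Or.inl ⟨u', e, ?_⟩))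
        exact stage2_vertex G G' G₀ G₁ e f u'
          (fun x y => (x = A ∧ y = B) ∨ (x = B ∧ y = A))
          (fun x => if x = A then 1 else if x = B then 1 else 0)
          ⟨hu', heG1, hG1v, ha1, hw1⟩ hef (fun h => hfu' h.symm) hfG hGv hGadj hGw
          hG0v hG0adj hG0w hG0wf
          (fun a b h => by rcases h with ⟨rfl, rfl⟩ | ⟨rfl, rfl⟩ <;> exact ⟨by assumption, by assumption⟩)
          (by simp [hAe.symm, hBe.symm])
    · -- Y = E
      have h12' : u₁' ≠ u₂' := fun hh => G₁.loopless u₁' (hh ▸ hadj12')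
      obtain ⟨h1V, h2V⟩ := G₁.support _ _ hadj12'
      have h1e : u₁' ≠ e := fun hh => heG1 (hh ▸ h1V)
      have h2e : u₂' ≠ e := fun hh => heG1 (hh ▸ h2V)
      by_cases hef : e = f
      · subst hef
        -- base pairs must match; then G ≈ G₁
        have h1 : G'.Adj e A := (hfnbG' A).mpr (Or.inl rfl)
        have h2 : G'.Adj e B := (hfnbG' B).mpr (Or.inr rfl)
        have eA : A = u₁' ∨ A = u₂' := by
          rcases (ha1 e A).mp h1 with ⟨h, -, -⟩ | ⟨-, h'⟩ | ⟨h', -⟩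
          · exact absurd h (not_adj_left G₁ e A heG1)
          · exact h'
          · exact absurd h' hAf
        have eB : B = u₁' ∨ B = u₂' := by
          rcases (ha1 e B).mp h2 with ⟨h, -, -⟩ | ⟨-, h'⟩ | ⟨h', -⟩
          · exact absurd h (not_adj_left G₁ e B heG1)
          · exact h'
          · exact absurd h' hBf
        -- normalize so A = u₁', B = u₂'
        have hmatch : (A = u₁' ∧ B = u₂') ∨ (A = u₂' ∧ B = u₁') := by
          rcases eA with h | h
          · rcases eB with h' | h'
            · exact absurd (h.trans h'.symm) hAB
            · exact Or.inl ⟨h, h'⟩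
          · rcases eB with h' | h'
            · exact Or.inr ⟨h, h'⟩
            · exact absurd (h.trans h'.symm) hAB
        have hB1' : IsEdgeBlowup G₁ G' A B e := by
          rcases hmatch with ⟨rfl, rfl⟩ | ⟨rfl, rfl⟩
          · exact ⟨hadj12', heG1, hG1v, ha1, hw1⟩
          · exact edgeBlowup_comm G₁ G' B A e ⟨hadj12', heG1, hG1v, ha1, hw1⟩
        have hG1adj := edgeBlowup_inv_adj G₁ G' A B e hB1'
        have hG1w := edgeBlowup_inv_w G₁ G' A B e hB1'
        exact constructible_of_weqv G₁ G hC1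
          (weqv_same G G₁ G' e
            (fun x y => (x = A ∧ y = B) ∨ (x = B ∧ y = A))
            (fun x => if x = A then 1 else if x = B then 1 else 0)
            hGv hG1v hfG heG1 hGadj hG1adj hGw hG1w)
      · -- e ≠ f : exceptional or generic
        by_cases hexc : (A = u₁' ∧ B = u₂') ∨ (A = u₂' ∧ B = u₁')
        · -- exceptional relabelling case
          have hB1' : IsEdgeBlowup G₁ G' A B e := by
            rcases hexc with ⟨rfl, rfl⟩ | ⟨rfl, rfl⟩
            · exact ⟨hadj12', heG1, hG1v, ha1, hw1⟩
            · exact edgeBlowup_comm G₁ G' B A e ⟨hadj12', heG1, hG1v, ha1, hw1⟩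
          exact exceptional_case G G₁ G' e f A B
            ⟨hABG, hfG, hGv, hGa, hGwraw⟩ hB1' hef hC1
        · -- generic case
          have hfV1 : f ∈ G₁.verts := f_mem_G1 G G₁ G' e f hG1v hGv hef
          have hfu1 : f ≠ u₁' := by
            intro h
            have hh := hw1 f
            rw [if_neg (fun hh2 : f = e => hef hh2.symm), if_pos h, hfw'] at hh
            have := hW1 u₁' h1V
            rw [h] at *
            omega
          have hfu2 : f ≠ u₂' := by
            intro h
            have hh := hw1 f
            rw [if_neg (fun hh2 : f = e => hef hh2.symm),
              if_neg (fun hh2 : f = u₁' => hfu1 hh2), if_pos h, hfw'] at hh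
            have := hW1 u₂' h2V
            rw [h] at *
            omega
          have hfadj1 : ∀ x, G₁.Adj f x ↔ G'.Adj f x := by
            intro x
            rw [ha1 f x]
            constructor
            · intro h
              exact Or.inl ⟨h, fun hh => hfu1 hh.1, fun hh => hfu2 hh.1⟩
            · rintro (⟨h, _, _⟩ | ⟨h1, _⟩ | ⟨_, h1 | h1⟩)
              · exact h
              · exact absurd h1.symm hef
              · exact absurd h1 hfu1
              · exact absurd h1 hfu2
          have hnb1 : ∀ x, G₁.Adj f x ↔ (x = A ∨ x = B) := fun x =>
            (hfadj1 x).trans (hfnbG' x)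
          have hAe : A ≠ e := by
            intro h
            have : G₁.Adj f A := (hnb1 A).mpr (Or.inl rfl)
            exact heG1 (h ▸ (G₁.support _ _ this).2)
          have hBe : B ≠ e := by
            intro h
            have : G₁.Adj f B := (hnb1 B).mpr (Or.inr rfl)
            exact heG1 (h ▸ (G₁.support _ _ this).2)
          have hnAB1 : ¬ G₁.Adj A B := by
            intro h
            refine hnGAB ((ha1 A B).mpr (Or.inl ⟨h, ?_, ?_⟩))
            · intro hh; exact hexc (Or.inl hh)
            · intro hh; exact hexc (Or.inr hh)
          have hwfG1 : G₁.weight f = -1 := by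
            have h := hw1 f
            rw [if_neg (fun hh : f = e => hef hh.symm), if_neg hfu1, if_neg hfu2] at h
            rw [← h, hfw']
          obtain ⟨G₀, hb0, hG0v, hG0adj, hG0w, hG0wf⟩ :=
            stage1_edge G₁ f A B (G.weight f) hfV1 hwfG1 hnb1 hAB hnAB1
          have hC0 := hIH G₀ (Or.inr (Or.inr ⟨A, B, f, hb0⟩))
          refine constructible_extend G₀ G hC0 (Or.inr (Or.inr ⟨u₁', u₂', e, ?_⟩))
          refine stage2_edge G G' G₀ G₁ e f u₁' u₂'
            (fun x y => (x = A ∧ y = B) ∨ (x = B ∧ y = A))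
            (fun x => if x = A then 1 else if x = B then 1 else 0)
            ⟨hadj12', heG1, hG1v, ha1, hw1⟩ hef (fun h => hfu1 h.symm) (fun h => hfu2 h.symm)
            hfG hGv hGadj hGw hG0v hG0adj hG0w hG0wf
            (fun a b h => by rcases h with ⟨rfl, rfl⟩ | ⟨rfl, rfl⟩ <;> exact ⟨by assumption, by assumption⟩)
            ?_ (by simp [hAe.symm, hBe.symm])
          rintro a b (⟨rfl, rfl⟩ | ⟨rfl, rfl⟩)
          · exact ⟨fun hh => hexc (Or.inl hh), fun hh => hexc (Or.inr hh)⟩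
          · exact ⟨fun hh => hexc (Or.inr ⟨hh.2, hh.1⟩), fun hh => hexc (Or.inl ⟨hh.2, hh.1⟩)⟩

/-! ### Closure of constructibility under the equivalence -/

lemma blowdown_closed : ∀ (n : ℕ) (Gs : ℕ → WGraph), Chain Gs n →
    ∀ G, IsBlowup G (Gs n) → Constructible G := by
  intro n
  induction n with
  | zero =>
    intro Gs hch G hB
    obtain ⟨e, _, hv, _, _⟩ := blowup_created _ _ hB
    rw [hch.1] at hv
    exact absurd hv.symm (Finset.insert_ne_empty e G.verts)
  | succ n ih =>
    intro Gs hch G hB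
    have hch1 : Chain Gs n := ⟨hch.1, fun i hi => hch.2 i (hi.trans (Nat.lt_succ_self n))⟩
    exact blowdown_step G (Gs n) (Gs (n + 1)) ⟨n, Gs, hch1, rfl⟩
      (fun K hk => ih Gs hch1 K hk) (chain_weight_le Gs n hch1)
      (hch.2 n (Nat.lt_succ_self n)) hB

lemma constructible_blowdown (G G' : WGraph) (hC : Constructible G') (h : IsBlowup G G') :
    Constructible G := by
  obtain ⟨n, Gs, hch, rfl⟩ := hC
  exact blowdown_closed n Gs hch G h

lemma wequiv_constructible (G H : WGraph) (h : WEquiv G H) :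
    Constructible G ↔ Constructible H := by
  induction h with
  | rel a b hab =>
    exact ⟨fun h => constructible_extend a b h hab,
      fun h => constructible_blowdown a b h hab⟩
  | refl a => exact Iff.rfl
  | symm a b _ ih => exact ih.symm
  | trans a b c _ _ ih1 ih2 => exact ih1.trans ih2

/-! ### The invariant along an erasing sequence -/

def Good (G : WGraph) (v : ℕ) : Prop :=
  v ∈ G.verts ∧ G.weight v < 0 ∧ (∀ w ∈ G.verts, w ≠ v → G.weight w < -1) ∧
    2 ≤ G.verts.card

lemma pairBlowup_good (G : WGraph) (v : ℕ) (G' : WGraph) (v' : ℕ)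
    (h : PairBlowup G v G' v') (hg : Good G v) : Good G' v' := by
  obtain ⟨hv, hwv, hsm, hcard⟩ := hg
  rcases h with ⟨hvG, he, hverts, ha, hw⟩ | ⟨u, hadj, hvu, he, hverts, ha, hw⟩
  · -- vertex blowup at v, created v'
    refine ⟨by rw [hverts]; exact Finset.mem_insert_self _ _, ?_, ?_, ?_⟩
    · rw [hw v', if_pos rfl]; norm_num
    · intro w hw' hne
      rw [hverts] at hw'
      rcases Finset.mem_insert.mp hw' with rfl | hw2
      · exact absurd rfl hne
      · rw [hw w]
        have hwne : w ≠ v' := fun hh => he (hh ▸ hw2)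
        rw [if_neg hwne]
        by_cases hwv2 : w = v
        · rw [if_pos hwv2]; omega
        · rw [if_neg hwv2]; exact hsm w hw2 hwv2
    · rw [hverts, Finset.card_insert_of_notMem he]; omega
  · -- edge blowup at the edge (v, u), created v'
    have huv : u ≠ v := fun hh => G.loopless v (hh ▸ hvu)
    have huV : u ∈ G.verts := (G.support _ _ hvu).2
    refine ⟨by rw [hverts]; exact Finset.mem_insert_self _ _, ?_, ?_, ?_⟩
    · rw [hw v', if_pos rfl]; norm_num
    · intro w hw' hne
      rw [hverts] at hw'
      rcases Finset.mem_insert.mp hw' with rfl | hw2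
      · exact absurd rfl hne
      · rw [hw w]
        have hwne : w ≠ v' := fun hh => he (hh ▸ hw2)
        rw [if_neg hwne]
        by_cases hwv2 : w = v
        · rw [if_pos hwv2]; omega
        · rw [if_neg hwv2]
          by_cases hwu : w = u
          · rw [if_pos hwu]
            have := hsm u huV huv
            omega
          · rw [if_neg hwu]; exact hsm w hw2 hwv2
    · rw [hverts, Finset.card_insert_of_notMem he]; omega


end NotErasableAux

/-- If `G` has at least two vertices, the distinguished vertex `v` has
negative weight, and every other vertex of `G` has weight strictly less than
`-1`, then the weighted pair `(G, v)` is not erasable. -/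
theorem not_erasable_of_small_weights
    (G : WGraph) (v : ℕ) (hv : v ∈ G.verts)
    (hcard : 2 ≤ G.verts.card)
    (hwv : G.weight v < 0)
    (hsmall : ∀ w ∈ G.verts, w ≠ v → G.weight w < -1) :
    ¬ Erasable G v := by
  rintro ⟨n, Gs, es, h0, he0, hstep, H, hdel, hemp⟩
  have hgood : ∀ i, i ≤ n → NotErasableAux.Good (Gs i) (es i) := by
    intro i
    induction i with
    | zero => intro _; rw [h0, he0]; exact ⟨hv, hwv, hsmall, hcard⟩
    | succ i ih =>
      intro hi
      exact NotErasableAux.pairBlowup_good _ _ _ _ (hstep i (by omega)) (ih (by omega))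
  obtain ⟨hvn, hwvn, hsmn, hcardn⟩ := hgood n le_rfl
  obtain ⟨hHv, hHadj, hHw⟩ := hdel
  obtain ⟨H0, hwe, hH0⟩ := hemp
  have hCH0 : NotErasableAux.Constructible H0 :=
    ⟨0, fun _ => H0, ⟨hH0, fun i hi => absurd hi (Nat.not_lt_zero i)⟩, rfl⟩
  have hCH : NotErasableAux.Constructible H :=
    (NotErasableAux.wequiv_constructible H H0 hwe).mpr hCH0
  have hne : H.verts.Nonempty := by
    rw [hHv, ← Finset.card_pos, Finset.card_erase_of_mem hvn]
    omega
  obtain ⟨x, hx, hwx⟩ := NotErasableAux.constructible_exists_neg_one H hCH hne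
  rw [hHv] at hx
  obtain ⟨hxne, hxV⟩ := Finset.mem_erase.mp hx
  have hlt := hsmn x hxV hxne
  rw [hHw x] at hwx
  omega
end

section
/- Let d and r_1, ..., r_m be positive integers with r_m = a_{h+1} where the sequence (r_1,...,r_m) is of the form (S(a_1,b_1), ..., S(a_h,b_h), a_{h+1} repeated e times) with a_{i+1} = gcd(a_i, b_i), a_1 > ... > a_h > a_{h+1} ≥ 1, e ≥ 0, and S(a,b) the Euclidean-algorithm sequence of (a,b). If d² = Σ r_i² and 3d - 2 = Σ r_i and a_{h+1} > 1, then a_{h+1} = 2 and a_{h+1} divides d. -/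
theorem euclidSeq_mem_dvd (a : ℕ) : ∀ b x, x ∈ euclidSeq a b → Nat.gcd a b ∣ x := by
  induction a using Nat.strong_induction_on with
  | _ a ih =>
    intro b x hx
    rw [euclidSeq] at hx
    split at hx
    · simp at hx
    · rename_i hne
      rw [List.mem_append] at hx
      rcases hx with hx | hx
      · rw [List.eq_of_mem_replicate hx]
        exact Nat.gcd_dvd_left a b
      · have := ih (b % a) (Nat.mod_lt _ (Nat.pos_of_ne_zero hne)) a x hx
        rwa [← Nat.gcd_rec] at this



/-- Suppose the multiplicity sequence `(r₁,…,r_m)` has the form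
`(S(a₁,b₁), …, S(a_h,b_h), a_{h+1} repeated e times)` with
`a_{i+1} = gcd(aᵢ,bᵢ)`, `a₁ > ⋯ > a_h > a_{h+1} ≥ 1`, and `d` is a positive
integer with `d² = Σ rᵢ²` and `3d - 2 = Σ rᵢ`.  If `a_{h+1} > 1` then
`a_{h+1} = 2` and `a_{h+1} ∣ d`. -/
theorem last_multiplicity_eq_two
    (h e : ℕ) (hh : 1 ≤ h) (a b : ℕ → ℕ)
    (hapos : ∀ i, 1 ≤ i → i ≤ h → 0 < a i)
    (hbpos : ∀ i, 1 ≤ i → i ≤ h → 0 < b i)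
    (hgcd : ∀ i, 1 ≤ i → i ≤ h → a (i + 1) = Nat.gcd (a i) (b i))
    (hdec : ∀ i, 1 ≤ i → i ≤ h → a (i + 1) < a i)
    (hlast : 1 ≤ a (h + 1))
    (r : List ℕ)
    (hr : r = ((List.range h).map (fun j => euclidSeq (a (j + 1)) (b (j + 1)))).flatten
            ++ List.replicate e (a (h + 1)))
    (d : ℕ) (hd : 0 < d)
    (h1 : d ^ 2 = (r.map (fun x => x ^ 2)).sum)
    (h2 : 3 * d = r.sum + 2)
    (hgt : 1 < a (h + 1)) :
    a (h + 1) = 2 ∧ a (h + 1) ∣ d := by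
  set g := a (h + 1) with hg
  -- chain divisibility: g ∣ a (i+1) for 1 ≤ i ≤ h
  have chain : ∀ k i, 1 ≤ i → i + k = h → g ∣ a (i + 1) := by
    intro k
    induction k with
    | zero => intro i hi hik; simp at hik; subst hik; rfl
    | succ k ih =>
      intro i hi hik
      have h1 : 1 ≤ i + 1 := by omega
      have h2 : (i + 1) + k = h := by omega
      have hdvd : g ∣ a (i + 2) := ih (i + 1) h1 h2
      have : a (i + 2) ∣ a (i + 1) := by
        rw [hgcd (i + 1) h1 (by omega)]
        exact Nat.gcd_dvd_left _ _
      exact hdvd.trans this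
  -- g divides every element of r
  have hmem : ∀ x ∈ r, g ∣ x := by
    intro x hx
    rw [hr, List.mem_append] at hx
    rcases hx with hx | hx
    · rw [List.mem_flatten] at hx
      obtain ⟨l, hl, hxl⟩ := hx
      rw [List.mem_map] at hl
      obtain ⟨j, hj, rfl⟩ := hl
      rw [List.mem_range] at hj
      have hdvd := euclidSeq_mem_dvd (a (j + 1)) (b (j + 1)) x hxl
      rw [← hgcd (j + 1) (by omega) (by omega)] at hdvd
      exact (chain (h - (j + 1)) (j + 1) (by omega) (by omega)).trans hdvd
    · rw [List.eq_of_mem_replicate hx]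
  have hsum : g ∣ r.sum := List.dvd_sum hmem
  have hsq : g ^ 2 ∣ (r.map (fun x => x ^ 2)).sum := by
    refine List.dvd_sum ?_
    intro x hx
    rw [List.mem_map] at hx
    obtain ⟨y, hy, rfl⟩ := hx
    exact pow_dvd_pow_of_dvd (hmem y hy) 2
  have hgd : g ∣ d := by
    have : g ^ 2 ∣ d ^ 2 := h1 ▸ hsq
    exact (Nat.pow_dvd_pow_iff two_ne_zero).mp this
  have hg2 : g ∣ 2 := by
    have h3d : g ∣ 3 * d := hgd.mul_left 3
    have := Nat.dvd_sub h3d hsum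
    rwa [h2, Nat.add_sub_cancel_left] at this
  exact ⟨Nat.le_antisymm (Nat.le_of_dvd (by norm_num) hg2) hgt, hgd⟩
end
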